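/- arXiv:1406.1721 — 13 statements merged into one kernel-verified Lean document; each statement's English description precedes it below -/
import Mathlib

section
/- Let K be a field of characteristic ≠ 2, n ≥ 1, and t : Fin n → K with t i ≠ 0 for all i and (t i)^2 ≠ (t j)^2 for all i ≠ j. Let μ : Fin n → ℕ be antitone and set λ j = 2·μ j + (n − j) for j ∈ Fin n (i.e. λ = 2μ + ρ(n)). Then the sum over all sign vectors ε of det(M_ε) / ( (∏ i, 2·ε i·t i) · ∏_{i<j} (ε i·t i + ε j·t j)·(ε j·t j − ε i·t i) ), where M_ε is the n×n matrix with entries (M_ε) i j = (ε i · t i)^(λ j + (n − 1 − j)), equals det(N) / ∏_{i<j} ((t j)^2 − (t i)^2), where N is the n×n matrix with entries N i j = ((t i)^2)^(μ j + (n − 1 − j)). (This is the Atiyah–Bott fixed-point evaluation of the Pragacz–Ratajski theorem: the equivariant push-forward of the Schur class s_λ(Q) over the Lagrangian Grassmannian LG(n) equals s_μ(t_1^2,…,t_n^2).) -/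
open Finset

/-- The sign vector `ε : Fin n → K` associated to a boolean vector `s`:
`ε i = 1` if `s i = true` and `ε i = -1` otherwise.  Every sign vector
(function with values in `{1, -1}`) arises this way exactly once. -/
def sgnv {K : Type*} [Ring K] {n : ℕ} (s : Fin n → Bool) : Fin n → K :=
  fun i => if s i then 1 else -1

/-- Atiyah–Bott fixed-point evaluation of the Pragacz–Ratajski theorem for `LG(n)`:
for `λ = 2μ + ρ(n)`, the fixed-point sum for `s_λ(Q)` equals
`s_μ(t₁², …, t_n²) = det((t_i²)^(μ_j + n − 1 − j)) / ∏_{i<j} (t_j² − t_i²)`. -/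
theorem pushforward_schur_LG (K : Type*) [Field K] (hK : (2 : K) ≠ 0)
    (n : ℕ) (hn : 1 ≤ n)
    (t : Fin n → K) (ht : ∀ i, t i ≠ 0)
    (ht2 : ∀ i j : Fin n, i ≠ j → (t i) ^ 2 ≠ (t j) ^ 2)
    (μ : Fin n → ℕ) (hμ : Antitone μ)
    (lam : Fin n → ℕ) (hlam : ∀ j : Fin n, lam j = 2 * μ j + (n - (j : ℕ))) :
    ∑ s : Fin n → Bool,
      (Matrix.of fun i j : Fin n =>
          (sgnv (K := K) s i * t i) ^ (lam j + (n - 1 - (j : ℕ)))).det /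
        ((∏ i, 2 * sgnv (K := K) s i * t i) *
          ∏ i, ∏ j ∈ Ioi i,
            (sgnv (K := K) s i * t i + sgnv (K := K) s j * t j) *
              (sgnv (K := K) s j * t j - sgnv (K := K) s i * t i))
      = (Matrix.of fun i j : Fin n => ((t i) ^ 2) ^ (μ j + (n - 1 - (j : ℕ)))).det /
          ∏ i, ∏ j ∈ Ioi i, ((t j) ^ 2 - (t i) ^ 2) := by
  set D := (Matrix.of fun i j : Fin n => ((t i) ^ 2) ^ (μ j + (n - 1 - (j : ℕ)))).det with hD
  set P := ∏ i, ∏ j ∈ Ioi i, ((t j) ^ 2 - (t i) ^ 2) with hP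
  have h2n : (2 : K) ^ n ≠ 0 := pow_ne_zero _ hK
  have key : ∀ s : Fin n → Bool,
      (Matrix.of fun i j : Fin n =>
          (sgnv (K := K) s i * t i) ^ (lam j + (n - 1 - (j : ℕ)))).det /
        ((∏ i, 2 * sgnv (K := K) s i * t i) *
          ∏ i, ∏ j ∈ Ioi i,
            (sgnv (K := K) s i * t i + sgnv (K := K) s j * t j) *
              (sgnv (K := K) s j * t j - sgnv (K := K) s i * t i))
      = D / (2 ^ n * P) := by
    intro s
    set g : Fin n → K := fun i => sgnv (K := K) s i * t i with hg
    have hsq : ∀ i, (sgnv (K := K) s i) ^ 2 = 1 := by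
      intro i; unfold sgnv; split <;> ring
    have hsgn_ne : ∀ i, sgnv (K := K) s i ≠ 0 := by
      intro i; unfold sgnv; split
      · exact one_ne_zero
      · intro h; apply hK; linear_combination -2 * h
    have hgt : ∀ i, (g i) ^ 2 = (t i) ^ 2 := by
      intro i; rw [hg]; rw [mul_pow, hsq, one_mul]
    have hgne : ∀ i, g i ≠ 0 := fun i => mul_ne_zero (hsgn_ne i) (ht i)
    have hexp : ∀ j : Fin n, lam j + (n - 1 - (j : ℕ)) = 2 * (μ j + (n - 1 - (j : ℕ))) + 1 := by
      intro j; have := j.isLt; rw [hlam]; omega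
    have hnum : (Matrix.of fun i j : Fin n =>
        (sgnv (K := K) s i * t i) ^ (lam j + (n - 1 - (j : ℕ)))).det
        = (∏ i, g i) * D := by
      rw [hD, ← Matrix.det_mul_column]
      congr 1; ext i j
      show (g i) ^ (lam j + (n - 1 - (j : ℕ))) = g i * ((t i) ^ 2) ^ (μ j + (n - 1 - (j : ℕ)))
      rw [hexp j, pow_succ, mul_comm, pow_mul, hgt]
    have hden1 : (∏ i, 2 * sgnv (K := K) s i * t i) = 2 ^ n * ∏ i, g i := by
      have : ∀ i : Fin n, 2 * sgnv (K := K) s i * t i = 2 * g i := fun i => by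
        rw [hg]; ring
      simp only [this]
      rw [Finset.prod_mul_distrib, Finset.prod_const, card_univ, Fintype.card_fin]
    have hden2 : (∏ i, ∏ j ∈ Ioi i,
            (sgnv (K := K) s i * t i + sgnv (K := K) s j * t j) *
              (sgnv (K := K) s j * t j - sgnv (K := K) s i * t i)) = P := by
      rw [hP]
      refine Finset.prod_congr rfl fun i _ => Finset.prod_congr rfl fun j _ => ?_
      show (g i + g j) * (g j - g i) = (t j) ^ 2 - (t i) ^ 2
      linear_combination hgt j - hgt i
    rw [hnum, hden1, hden2]
    have hc : (∏ i, g i) ≠ 0 := Finset.prod_ne_zero_iff.mpr fun i _ => hgne i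
    rw [show (2 ^ n * ∏ i, g i) * P = (∏ i, g i) * (2 ^ n * P) by ring,
      mul_div_mul_left _ _ hc]
  rw [Finset.sum_congr rfl fun s _ => key s, Finset.sum_const, card_univ]
  have hcard : Fintype.card (Fin n → Bool) = 2 ^ n := by
    simp [Fintype.card_fun]
  rw [hcard, nsmul_eq_mul, Nat.cast_pow, Nat.cast_ofNat, mul_div_assoc',
    mul_div_mul_left _ _ h2n]
end

section
/- Let K be a field of characteristic ≠ 2, n ≥ 1, and t : Fin n → K with t i ≠ 0 for all i and (t i)^2 ≠ (t j)^2 for all i ≠ j. Let λ : Fin n → ℕ be antitone and suppose there exists j ∈ Fin n such that λ j + (n − 1 − j) is even (equivalently, λ is not of the form 2μ + ρ(n) for a partition μ). Then the sum over all sign vectors ε of det(M_ε) / ( (∏ i, 2·ε i·t i) · ∏_{i<j} (ε i·t i + ε j·t j)·(ε j·t j − ε i·t i) ), where (M_ε) i j = (ε i · t i)^(λ j + (n − 1 − j)), equals 0. (Vanishing part of the Pragacz–Ratajski theorem for LG(n).) -/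
open Finset

/-- Vanishing part of the Pragacz–Ratajski theorem for `LG(n)`:
if some `λ j + (n − 1 − j)` is even (i.e. `λ` is not of the form `2μ + ρ(n)`),
then the fixed-point sum for `s_λ(Q)` vanishes. -/
theorem pushforward_schur_LG_vanishing (K : Type*) [Field K] (hK : (2 : K) ≠ 0)
    (n : ℕ) (hn : 1 ≤ n)
    (t : Fin n → K) (ht : ∀ i, t i ≠ 0)
    (ht2 : ∀ i j : Fin n, i ≠ j → (t i) ^ 2 ≠ (t j) ^ 2)
    (lam : Fin n → ℕ) (hlam : Antitone lam)
    (hpar : ∃ j : Fin n, Even (lam j + (n - 1 - (j : ℕ)))) :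
    ∑ s : Fin n → Bool,
      (Matrix.of fun i j : Fin n =>
          (sgnv (K := K) s i * t i) ^ (lam j + (n - 1 - (j : ℕ)))).det /
        ((∏ i, 2 * sgnv (K := K) s i * t i) *
          ∏ i, ∏ j ∈ Ioi i,
            (sgnv (K := K) s i * t i + sgnv (K := K) s j * t j) *
              (sgnv (K := K) s j * t j - sgnv (K := K) s i * t i))
      = 0 := by
  classical
  obtain ⟨j0, hj0⟩ := hpar
  set e : Fin n → ℕ := fun j => lam j + (n - 1 - (j : ℕ)) with he
  set D : K := (∏ i, 2 * t i) * ∏ i, ∏ j ∈ Ioi i, (t j ^ 2 - t i ^ 2) with hD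
  have hsq : ∀ (s : Fin n → Bool) (i : Fin n),
      sgnv (K := K) s i * sgnv (K := K) s i = 1 := by
    intro s i
    unfold sgnv
    by_cases h : s i <;> simp [h]
  -- the denominator is (∏ ε) * D
  have hden : ∀ s : Fin n → Bool,
      ((∏ i, 2 * sgnv (K := K) s i * t i) *
        ∏ i, ∏ j ∈ Ioi i,
          (sgnv (K := K) s i * t i + sgnv (K := K) s j * t j) *
            (sgnv (K := K) s j * t j - sgnv (K := K) s i * t i))
      = (∏ i, sgnv (K := K) s i) * D := by
    intro s
    have h1 : (∏ i, 2 * sgnv (K := K) s i * t i)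
        = (∏ i, sgnv (K := K) s i) * ∏ i, 2 * t i := by
      rw [← Finset.prod_mul_distrib]
      exact Finset.prod_congr rfl fun i _ => by ring
    have h2 : (∏ i, ∏ j ∈ Ioi i,
          (sgnv (K := K) s i * t i + sgnv (K := K) s j * t j) *
            (sgnv (K := K) s j * t j - sgnv (K := K) s i * t i))
        = ∏ i, ∏ j ∈ Ioi i, (t j ^ 2 - t i ^ 2) := by
      refine Finset.prod_congr rfl fun i _ => Finset.prod_congr rfl fun j _ => ?_
      have hij : (sgnv (K := K) s i * t i + sgnv (K := K) s j * t j) *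
            (sgnv (K := K) s j * t j - sgnv (K := K) s i * t i)
          = (sgnv (K := K) s j * sgnv (K := K) s j) * t j ^ 2
            - (sgnv (K := K) s i * sgnv (K := K) s i) * t i ^ 2 := by ring
      rw [hij, hsq, hsq]; ring
    rw [h1, h2, hD]; ring
  -- the key cancellation: sum of signed determinants vanishes
  have key : ∑ s : Fin n → Bool,
      (∏ i, sgnv (K := K) s i) *
        (Matrix.of fun i j : Fin n => (sgnv (K := K) s i * t i) ^ e j).det = 0 := by
    -- signed det = det of row-scaled matrix
    have h1 : ∀ s : Fin n → Bool,
        (∏ i, sgnv (K := K) s i) *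
          (Matrix.of fun i j : Fin n => (sgnv (K := K) s i * t i) ^ e j).det
        = (Matrix.of fun i j : Fin n =>
            sgnv (K := K) s i * (sgnv (K := K) s i * t i) ^ e j).det := by
      intro s
      exact (Matrix.det_mul_column (fun i => sgnv (K := K) s i) _).symm
    simp_rw [h1]
    -- expand by multilinearity
    set g : ∀ _ : Fin n, Bool → (Fin n → K) :=
      fun i b => fun j => (if b then (1 : K) else -1) * ((if b then (1 : K) else -1) * t i) ^ e j
      with hg
    have h2 : ∀ s : Fin n → Bool,
        (Matrix.of fun i j : Fin n =>
            sgnv (K := K) s i * (sgnv (K := K) s i * t i) ^ e j).det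
        = (Matrix.detRowAlternating : (Fin n → K) [⋀^Fin n]→ₗ[K] K).toMultilinearMap
            (fun i => g i (s i)) := by
      intro s; rfl
    simp_rw [h2]
    rw [← MultilinearMap.map_sum]
    have h3 : (fun i => ∑ b : Bool, g i b)
        = fun i j : Fin n => (t i) ^ e j + (-1 : K) * (-(t i)) ^ e j := by
      funext i j
      simp only [Finset.sum_apply, hg]
      rw [Fintype.sum_bool]
      simp
    rw [h3]
    have h4 : ∀ i : Fin n,
        ((Matrix.of fun i j : Fin n => (t i) ^ e j + (-1 : K) * (-(t i)) ^ e j)) i j0 = 0 := by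
      intro i
      have : Even (e j0) := hj0
      simp [Matrix.of_apply, this.neg_pow]
    exact Matrix.det_eq_zero_of_column_eq_zero j0 h4
  -- rewrite each term and conclude
  have hterm : ∀ s : Fin n → Bool,
      (Matrix.of fun i j : Fin n => (sgnv (K := K) s i * t i) ^ e j).det /
        ((∏ i, 2 * sgnv (K := K) s i * t i) *
          ∏ i, ∏ j ∈ Ioi i,
            (sgnv (K := K) s i * t i + sgnv (K := K) s j * t j) *
              (sgnv (K := K) s j * t j - sgnv (K := K) s i * t i))
      = ((∏ i, sgnv (K := K) s i) *
          (Matrix.of fun i j : Fin n => (sgnv (K := K) s i * t i) ^ e j).det) / D := by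
    intro s
    rw [hden s]
    have hps : (∏ i, sgnv (K := K) s i) * (∏ i, sgnv (K := K) s i) = 1 := by
      rw [← Finset.prod_mul_distrib]
      simp [hsq s]
    have hinv : (∏ i, sgnv (K := K) s i)⁻¹ = ∏ i, sgnv (K := K) s i :=
      (eq_inv_of_mul_eq_one_left hps).symm
    rw [div_eq_mul_inv, div_eq_mul_inv, mul_inv, hinv]
    ring
  calc ∑ s : Fin n → Bool,
      (Matrix.of fun i j : Fin n => (sgnv (K := K) s i * t i) ^ e j).det /
        ((∏ i, 2 * sgnv (K := K) s i * t i) *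
          ∏ i, ∏ j ∈ Ioi i,
            (sgnv (K := K) s i * t i + sgnv (K := K) s j * t j) *
              (sgnv (K := K) s j * t j - sgnv (K := K) s i * t i))
      = ∑ s : Fin n → Bool,
          ((∏ i, sgnv (K := K) s i) *
            (Matrix.of fun i j : Fin n => (sgnv (K := K) s i * t i) ^ e j).det) / D := by
        exact Finset.sum_congr rfl fun s _ => hterm s
    _ = (∑ s : Fin n → Bool,
          (∏ i, sgnv (K := K) s i) *
            (Matrix.of fun i j : Fin n => (sgnv (K := K) s i * t i) ^ e j).det) / D := by
        rw [Finset.sum_div]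
    _ = 0 := by rw [key, zero_div]
end

section
/- Let K be a field of characteristic ≠ 2, n ≥ 1, and t : Fin n → K with t i ≠ 0 for all i and (t i)^2 ≠ (t j)^2 for all i ≠ j. Let μ : Fin n → ℕ be antitone, set λ j = 2·μ j + (n − j), and suppose S is a multivariate polynomial in MvPolynomial (Fin n) K satisfying S · ∏_{i<j} (X j − X i) = det( (i,j) ↦ (X i)^(μ j + (n − 1 − j)) ) (so S is the Schur polynomial s_μ in the Jacobi bialternant sense). Then the sum over all sign vectors ε of det(M_ε) / ( (∏ i, 2·ε i·t i) · ∏_{i<j} (ε i·t i + ε j·t j)·(ε j·t j − ε i·t i) ), where (M_ε) i j = (ε i · t i)^(λ j + (n − 1 − j)), equals the evaluation of S at the point (t 0)^2, (t 1)^2, …, (t (n−1))^2. (Pragacz–Ratajski: ω_* s_λ(Q) = s_μ^{[2]}, i.e. s_μ(t_1^2,…,t_n^2), for LG(n).) -/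
open Finset

/-- Pragacz–Ratajski for `LG(n)`: if `S` is the Schur polynomial `s_μ` in the Jacobi
bialternant sense (`S · ∏_{i<j}(X j − X i) = det((X i)^(μ j + n − 1 − j))`) and
`λ = 2μ + ρ(n)`, then the fixed-point sum for `s_λ(Q)` equals `S(t₁², …, t_n²)`. -/
theorem pushforward_schur_LG_eval (K : Type*) [Field K] (hK : (2 : K) ≠ 0)
    (n : ℕ) (hn : 1 ≤ n)
    (t : Fin n → K) (ht : ∀ i, t i ≠ 0)
    (ht2 : ∀ i j : Fin n, i ≠ j → (t i) ^ 2 ≠ (t j) ^ 2)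
    (μ : Fin n → ℕ) (hμ : Antitone μ)
    (lam : Fin n → ℕ) (hlam : ∀ j : Fin n, lam j = 2 * μ j + (n - (j : ℕ)))
    (S : MvPolynomial (Fin n) K)
    (hS : S * ∏ i, ∏ j ∈ Ioi i, (MvPolynomial.X j - MvPolynomial.X i)
        = (Matrix.of fun i j : Fin n =>
            (MvPolynomial.X i : MvPolynomial (Fin n) K) ^ (μ j + (n - 1 - (j : ℕ)))).det) :
    ∑ s : Fin n → Bool,
      (Matrix.of fun i j : Fin n =>
          (sgnv (K := K) s i * t i) ^ (lam j + (n - 1 - (j : ℕ)))).det /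
        ((∏ i, 2 * sgnv (K := K) s i * t i) *
          ∏ i, ∏ j ∈ Ioi i,
            (sgnv (K := K) s i * t i + sgnv (K := K) s j * t j) *
              (sgnv (K := K) s j * t j - sgnv (K := K) s i * t i))
      = MvPolynomial.eval (fun i => (t i) ^ 2) S := by
  classical
  set V : K := ∏ i, ∏ j ∈ Ioi i, ((t j) ^ 2 - (t i) ^ 2) with hV
  have hVne : V ≠ 0 := by
    rw [hV]
    apply Finset.prod_ne_zero_iff.mpr
    intro i _
    apply Finset.prod_ne_zero_iff.mpr
    intro j hj
    exact sub_ne_zero.mpr (ht2 j i (Finset.mem_Ioi.mp hj).ne')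
  set A : Matrix (Fin n) (Fin n) K :=
    Matrix.of fun i j : Fin n => ((t i) ^ 2) ^ (μ j + (n - 1 - (j : ℕ))) with hAdef
  have hA : MvPolynomial.eval (fun i => (t i) ^ 2) S * V = A.det := by
    have h2 := congrArg (MvPolynomial.eval fun i => (t i) ^ 2) hS
    rw [map_mul, RingHom.map_det] at h2
    convert h2 using 2
    · rw [hV]
      rw [map_prod]
      refine Finset.prod_congr rfl fun i _ => ?_
      rw [map_prod]
      refine Finset.prod_congr rfl fun j _ => ?_
      simp
    · ext i j
      simp [hAdef, Matrix.map]
  have hsq : ∀ (s : Fin n → Bool) (i : Fin n), (sgnv (K := K) s i) ^ 2 = 1 := by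
    intro s i
    by_cases h : s i <;> simp [sgnv, h]
  have hsne : ∀ (s : Fin n → Bool) (i : Fin n), sgnv (K := K) s i ≠ 0 := by
    intro s i
    by_cases h : s i <;> simp [sgnv, h]
  have key : ∀ s : Fin n → Bool,
      (Matrix.of fun i j : Fin n =>
          (sgnv (K := K) s i * t i) ^ (lam j + (n - 1 - (j : ℕ)))).det /
        ((∏ i, 2 * sgnv (K := K) s i * t i) *
          ∏ i, ∏ j ∈ Ioi i,
            (sgnv (K := K) s i * t i + sgnv (K := K) s j * t j) *
              (sgnv (K := K) s j * t j - sgnv (K := K) s i * t i))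
      = A.det / ((2 : K) ^ n * V) := by
    intro s
    set ε : Fin n → K := sgnv (K := K) s with hε
    set P : K := ∏ i, ε i * t i with hP
    have hPne : P ≠ 0 := by
      rw [hP]
      exact Finset.prod_ne_zero_iff.mpr fun i _ => mul_ne_zero (hsne s i) (ht i)
    have hεt2 : ∀ i, (ε i * t i) ^ 2 = (t i) ^ 2 := by
      intro i
      rw [mul_pow, hsq s i, one_mul]
    have hnum : (Matrix.of fun i j : Fin n =>
        (ε i * t i) ^ (lam j + (n - 1 - (j : ℕ)))).det = P * A.det := by
      have hentry : ∀ i j : Fin n, (ε i * t i) ^ (lam j + (n - 1 - (j : ℕ)))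
          = (ε i * t i) * ((t i) ^ 2) ^ (μ j + (n - 1 - (j : ℕ))) := by
        intro i j
        have hexp : lam j + (n - 1 - (j : ℕ)) = 2 * (μ j + (n - 1 - (j : ℕ))) + 1 := by
          have := j.isLt
          rw [hlam j]; omega
        rw [hexp, pow_succ, pow_mul, hεt2, mul_comm]
      have : (Matrix.of fun i j : Fin n =>
          (ε i * t i) ^ (lam j + (n - 1 - (j : ℕ))))
          = Matrix.of fun i j : Fin n => (ε i * t i) * A i j := by
        ext i j
        exact hentry i j
      rw [this, Matrix.det_mul_column, hP]
    have hden : (∏ i, 2 * ε i * t i) *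
        ∏ i, ∏ j ∈ Ioi i,
          (ε i * t i + ε j * t j) * (ε j * t j - ε i * t i)
        = (2 : K) ^ n * P * V := by
      have h1 : (∏ i, 2 * ε i * t i) = (2 : K) ^ n * P := by
        rw [hP]
        simp only [mul_assoc]
        rw [Finset.prod_mul_distrib, Finset.prod_const, Finset.card_univ, Fintype.card_fin]
      have h2 : ∀ i j : Fin n,
          (ε i * t i + ε j * t j) * (ε j * t j - ε i * t i) = (t j) ^ 2 - (t i) ^ 2 := by
        intro i j
        calc (ε i * t i + ε j * t j) * (ε j * t j - ε i * t i)
            = (ε j * t j) ^ 2 - (ε i * t i) ^ 2 := by ring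
          _ = (t j) ^ 2 - (t i) ^ 2 := by rw [hεt2, hεt2]
      rw [h1]
      congr 1
      rw [hV]
      exact Finset.prod_congr rfl fun i _ => Finset.prod_congr rfl fun j _ => h2 i j
    rw [hnum, hden]
    rw [mul_comm ((2:K)^n) P, mul_assoc]
    rw [mul_div_mul_left _ _ hPne]
  rw [Finset.sum_congr rfl fun s _ => key s, Finset.sum_const]
  have hcard : Fintype.card (Fin n → Bool) = 2 ^ n := by simp
  rw [Finset.card_univ, hcard, nsmul_eq_mul]
  have h2n : ((2 : K) ^ n) ≠ 0 := pow_ne_zero _ hK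
  have : MvPolynomial.eval (fun i => (t i) ^ 2) S = A.det / V :=
    (eq_div_iff hVne).mpr hA
  rw [this]
  push_cast
  field_simp
end

section
/- Let R be a commutative ring, n ≥ 1, t : Fin n → R, and let F be the formal power series in MvPowerSeries (Fin n) R determined by (∏ i, (1 − (t i)^2·(X i)^2)) * F = 1. Let μ : Fin n → ℕ be antitone and set λ j = 2·μ j + (n − j). For a permutation σ of Fin n let e_σ : Fin n →₀ ℕ be given by e_σ i = λ (σ⁻¹ i) + (n − 1 − σ⁻¹ i). Then Σ_{σ ∈ Perm(Fin n)} sign(σ) · (coefficient of the monomial e_σ in (∏ i, X i) * F) = det( (i,j) ↦ (t i)^(2·(μ j + (n − 1 − j))) ). (This is the iterated-residue-at-infinity evaluation of the push-forward of the Schur class s_λ over LG(n): the residue equals det((t_i^2)^{μ_j + n−1−j}) = s_μ(t^2)·∏_{i<j}(t_j^2 − t_i^2).) -/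
open Finset

section aux

variable {R : Type*} [CommRing R] {n : ℕ}

lemma prod_X_eq_monomial (s : Finset (Fin n)) :
    (∏ i ∈ s, (MvPowerSeries.X i : MvPowerSeries (Fin n) R))
      = MvPowerSeries.monomial (∑ i ∈ s, Finsupp.single i 1) 1 := by
  classical
  induction s using Finset.induction_on with
  | empty => simp [MvPowerSeries.monomial_zero_eq_C]
  | insert _ _ hj ih =>
      rw [Finset.prod_insert hj, Finset.sum_insert hj, ih, MvPowerSeries.X_def,
        MvPowerSeries.monomial_mul_monomial, one_mul]

lemma coeff_recursion (a : R) (j : Fin n) (g : MvPowerSeries (Fin n) R)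
    (d : Fin n →₀ ℕ) :
    MvPowerSeries.coeff d ((1 - MvPowerSeries.C a * MvPowerSeries.X j ^ 2) * g)
      = MvPowerSeries.coeff d g
        - (if 2 ≤ d j then a * MvPowerSeries.coeff (d - Finsupp.single j 2) g else 0) := by
  have hX : (MvPowerSeries.C a * MvPowerSeries.X j ^ 2 : MvPowerSeries (Fin n) R)
      = MvPowerSeries.monomial (Finsupp.single j 2) a := by
    rw [MvPowerSeries.X_pow_eq, ← MvPowerSeries.monomial_zero_eq_C_apply,
      MvPowerSeries.monomial_mul_monomial, zero_add, mul_one]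
  rw [sub_mul, one_mul, map_sub, hX, MvPowerSeries.coeff_monomial_mul]
  simp only [Finsupp.single_le_iff]

lemma coeff_of_geom (a : Fin n → R) (s : Finset (Fin n)) :
    ∀ g : MvPowerSeries (Fin n) R,
      (∏ i ∈ s, (1 - MvPowerSeries.C (a i) * (MvPowerSeries.X i) ^ 2)) * g = 1 →
      ∀ d : Fin n →₀ ℕ,
        MvPowerSeries.coeff d g
          = ∏ i : Fin n,
              (if i ∈ s then (if Even (d i) then a i ^ (d i / 2) else 0)
               else (if d i = 0 then 1 else 0)) := by
  classical
  induction s using Finset.induction_on with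
  | empty =>
      intro g hg d
      rw [Finset.prod_empty, one_mul] at hg
      subst hg
      rw [MvPowerSeries.coeff_one]
      by_cases hd : d = 0
      · subst hd; simp
      · rw [if_neg hd]
        obtain ⟨i, hi⟩ : ∃ i, d i ≠ 0 := by
          by_contra h
          push_neg at h
          exact hd (Finsupp.ext fun i => h i)
        exact (Finset.prod_eq_zero (Finset.mem_univ i) (by simp [hi])).symm
  | @insert j s' hj ih =>
      intro g hg d
      rw [Finset.prod_insert hj, mul_comm (1 - _), mul_assoc] at hg
      have ihg := ih _ hg
      -- recursion in d j
      have key : ∀ k : ℕ, ∀ d : Fin n →₀ ℕ, d j = k →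
          MvPowerSeries.coeff d g
            = ∏ i : Fin n,
                (if i ∈ insert j s' then (if Even (d i) then a i ^ (d i / 2) else 0)
                 else (if d i = 0 then 1 else 0)) := by
        intro k
        induction k using Nat.strong_induction_on with
        | _ k IH =>
          intro d hdj
          have hrec := coeff_recursion (a j) j g d
          rw [ihg d] at hrec
          have hcoeff : MvPowerSeries.coeff d g
              = (∏ i : Fin n,
                  (if i ∈ s' then (if Even (d i) then a i ^ (d i / 2) else 0)
                   else (if d i = 0 then 1 else 0)))
                + (if 2 ≤ d j then a j * MvPowerSeries.coeff (d - Finsupp.single j 2) g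
                   else 0) := by linear_combination -hrec
          rw [hcoeff]
          by_cases h2 : 2 ≤ d j
          · -- first summand is zero (factor at j is: d j = 0? no)
            have hz : (∏ i : Fin n,
                (if i ∈ s' then (if Even (d i) then a i ^ (d i / 2) else 0)
                 else (if d i = 0 then 1 else 0))) = 0 := by
              apply Finset.prod_eq_zero (Finset.mem_univ j)
              rw [if_neg hj, if_neg (by omega)]
            rw [hz, zero_add, if_pos h2]
            set d' : Fin n →₀ ℕ := d - Finsupp.single j 2 with hd'
            have hd'apply : ∀ i, d' i = if i = j then d j - 2 else d i := by
              intro i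
              rw [hd', Finsupp.tsub_apply, Finsupp.single_apply]
              by_cases hij : i = j
              · subst hij; simp
              · rw [if_neg (fun h => hij h.symm), if_neg hij, Nat.sub_zero]
            have hd'j : d' j = k - 2 := by rw [hd'apply]; simp [hdj]
            rw [IH (k - 2) (by omega) d' hd'j]
            rw [Fintype.prod_eq_mul_prod_compl j, Fintype.prod_eq_mul_prod_compl j,
              ← mul_assoc]
            congr 1
            · rw [if_pos (Finset.mem_insert_self _ _), if_pos (Finset.mem_insert_self _ _),
                hd'apply, if_pos rfl]
              have heven : Even (d j - 2) ↔ Even (d j) := by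
                rw [Nat.even_sub h2]; simp
              by_cases he : Even (d j)
              · rw [if_pos (heven.mpr he), if_pos he]
                rw [← pow_succ']
                congr 1
                omega
              · rw [if_neg (fun h => he (heven.mp h)), if_neg he, mul_zero]
            · apply Finset.prod_congr rfl
              intro i hi
              rw [Finset.mem_compl, Finset.mem_singleton] at hi
              rw [hd'apply, if_neg hi]
          · rw [if_neg h2, add_zero]
            apply Finset.prod_congr rfl
            intro i _
            by_cases hij : i = j
            · subst hij
              rw [if_neg hj, if_pos (Finset.mem_insert_self _ _)]
              have hcases : d i = 0 ∨ d i = 1 := by omega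
              rcases hcases with h | h <;> simp [h, Nat.even_iff]
            · simp [Finset.mem_insert, hij]
      exact key (d j) d rfl

end aux

/-- Iterated-residue-at-infinity evaluation of the push-forward of `s_λ` over `LG(n)`
for `λ = 2μ + ρ(n)`: the signed sum of the coefficients of `(∏ i, X i) · F`, where
`F` is the expansion of `∏ i 1/(1 − t_i² X_i²)`, equals
`det((t_i²)^(μ_j + n − 1 − j))`. -/
theorem residue_schur_LG (R : Type*) [CommRing R] (n : ℕ) (hn : 1 ≤ n)
    (t : Fin n → R) (F : MvPowerSeries (Fin n) R)
    (hF : (∏ i, (1 - MvPowerSeries.C ((t i) ^ 2) * (MvPowerSeries.X i) ^ 2)) * F = 1)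
    (μ : Fin n → ℕ) (hμ : Antitone μ)
    (lam : Fin n → ℕ) (hlam : ∀ j : Fin n, lam j = 2 * μ j + (n - (j : ℕ))) :
    ∑ σ : Equiv.Perm (Fin n),
      ((Equiv.Perm.sign σ : ℤ) : R) *
        MvPowerSeries.coeff
          (Finsupp.equivFunOnFinite.symm fun i => lam (σ⁻¹ i) + (n - 1 - ((σ⁻¹ i : Fin n) : ℕ)))
          ((∏ i, MvPowerSeries.X i) * F)
      = (Matrix.of fun i j : Fin n => (t i) ^ (2 * (μ j + (n - 1 - (j : ℕ))))).det := by
  classical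
  have hcoeffF : ∀ d : Fin n →₀ ℕ, MvPowerSeries.coeff d F
      = ∏ i : Fin n, (if Even (d i) then (t i ^ 2) ^ (d i / 2) else 0) := by
    intro d
    rw [coeff_of_geom (fun i => t i ^ 2) Finset.univ F hF d]
    exact Finset.prod_congr rfl fun i _ => by rw [if_pos (Finset.mem_univ i)]
  have hu : ∀ i : Fin n, (∑ i' : Fin n, Finsupp.single i' (1 : ℕ)) i = 1 := by
    intro i
    rw [Finset.sum_apply']
    simp [Finsupp.single_apply]
  have key : ∀ σ : Equiv.Perm (Fin n),
      MvPowerSeries.coeff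
          (Finsupp.equivFunOnFinite.symm fun i => lam (σ⁻¹ i) + (n - 1 - ((σ⁻¹ i : Fin n) : ℕ)))
          ((∏ i, MvPowerSeries.X i) * F)
        = ∏ i : Fin n, t i ^ (2 * (μ (σ⁻¹ i) + (n - 1 - ((σ⁻¹ i : Fin n) : ℕ)))) := by
    intro σ
    set v : Fin n →₀ ℕ := Finsupp.equivFunOnFinite.symm
        (fun i => 2 * (μ (σ⁻¹ i) + (n - 1 - ((σ⁻¹ i : Fin n) : ℕ)))) with hv
    have hsplit : (Finsupp.equivFunOnFinite.symm
          fun i => lam (σ⁻¹ i) + (n - 1 - ((σ⁻¹ i : Fin n) : ℕ)))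
        = (∑ i : Fin n, Finsupp.single i 1) + v := by
      ext i
      rw [Finsupp.add_apply, hu i]
      simp only [hv, Finsupp.coe_equivFunOnFinite_symm]
      rw [hlam]
      have := (σ⁻¹ i).isLt
      omega
    rw [hsplit, prod_X_eq_monomial, MvPowerSeries.coeff_add_monomial_mul, one_mul, hcoeffF]
    apply Finset.prod_congr rfl
    intro i _
    have hvi : v i = 2 * (μ (σ⁻¹ i) + (n - 1 - ((σ⁻¹ i : Fin n) : ℕ))) := by
      simp [hv]
    rw [hvi, if_pos (even_two_mul _), Nat.mul_div_cancel_left _ (by norm_num), pow_mul]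
  calc
    ∑ σ : Equiv.Perm (Fin n),
        ((Equiv.Perm.sign σ : ℤ) : R) *
          MvPowerSeries.coeff
            (Finsupp.equivFunOnFinite.symm fun i => lam (σ⁻¹ i) + (n - 1 - ((σ⁻¹ i : Fin n) : ℕ)))
            ((∏ i, MvPowerSeries.X i) * F)
      = ∑ σ : Equiv.Perm (Fin n),
          ((Equiv.Perm.sign σ : ℤ) : R) *
            ∏ i : Fin n, t i ^ (2 * (μ (σ⁻¹ i) + (n - 1 - ((σ⁻¹ i : Fin n) : ℕ)))) :=
        Finset.sum_congr rfl fun σ _ => by rw [key σ]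
    _ = (Matrix.of fun i j : Fin n => (t i) ^ (2 * (μ j + (n - 1 - (j : ℕ))))).det := by
        rw [← Matrix.det_transpose, Matrix.det_apply]
        apply Fintype.sum_equiv (Equiv.inv (Equiv.Perm (Fin n)))
        intro σ
        simp only [Equiv.inv_apply, Matrix.transpose_apply, Matrix.of_apply,
          Equiv.Perm.sign_inv, Units.smul_def, zsmul_eq_mul]
end

section
/- Let R be a commutative ring, n ≥ 1, t : Fin n → R, and let F be the formal power series in MvPowerSeries (Fin n) R determined by (∏ i, (1 − (t i)^2·(X i)^2)) * F = 1. Let λ : Fin n → ℕ be antitone and suppose there exists j ∈ Fin n with λ j + (n − 1 − j) even. For a permutation σ of Fin n let e_σ : Fin n →₀ ℕ be given by e_σ i = λ (σ⁻¹ i) + (n − 1 − σ⁻¹ i). Then Σ_{σ ∈ Perm(Fin n)} sign(σ) · (coefficient of the monomial e_σ in (∏ i, X i) * F) = 0. (Vanishing of the iterated residue for LG(n) when λ is not of the form 2μ + ρ(n).) -/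
open Finset

namespace ResidueAux

open MvPowerSeries

variable {σ : Type*} [DecidableEq σ] {R : Type*} [CommRing R]

/-- Rescaling each variable `X i` by `c i`, as a function. -/
noncomputable def rescaleFun (c : σ → R) (P : MvPowerSeries σ R) : MvPowerSeries σ R :=
  fun e => (e.prod fun i k => c i ^ k) * MvPowerSeries.coeff e P

theorem coeff_rescaleFun (c : σ → R) (P : MvPowerSeries σ R) (e : σ →₀ ℕ) :
    MvPowerSeries.coeff e (rescaleFun c P) =
      (e.prod fun i k => c i ^ k) * MvPowerSeries.coeff e P := rfl

theorem rescaleFun_one (c : σ → R) : rescaleFun c (1 : MvPowerSeries σ R) = 1 := by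
  ext e
  rw [coeff_rescaleFun, MvPowerSeries.coeff_one]
  split
  · next h => subst h; simp
  · simp

theorem rescaleFun_mul (c : σ → R) (P Q : MvPowerSeries σ R) :
    rescaleFun c (P * Q) = rescaleFun c P * rescaleFun c Q := by
  ext e
  rw [coeff_rescaleFun, MvPowerSeries.coeff_mul, MvPowerSeries.coeff_mul, Finset.mul_sum]
  refine Finset.sum_congr rfl fun p hp => ?_
  have hpe : p.1 + p.2 = e := Finset.HasAntidiagonal.mem_antidiagonal.mp hp
  have hw : (e.prod fun i k => c i ^ k) =
      (p.1.prod fun i k => c i ^ k) * (p.2.prod fun i k => c i ^ k) := by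
    rw [← hpe]
    exact Finsupp.prod_add_index' (fun i => pow_zero _) (fun i k l => pow_add _ _ _)
  rw [coeff_rescaleFun, coeff_rescaleFun, hw]
  ring

theorem rescaleFun_monomial (c : σ → R) (m : σ →₀ ℕ) (a : R) :
    rescaleFun c (monomial m a) = monomial m ((m.prod fun i k => c i ^ k) * a) := by
  ext e
  rw [coeff_rescaleFun, MvPowerSeries.coeff_monomial, MvPowerSeries.coeff_monomial]
  split
  · next h => subst h; rfl
  · exact mul_zero _

theorem rescaleFun_C (c : σ → R) (a : R) : rescaleFun c (C a) = C a := by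
  rw [← monomial_zero_eq_C_apply, rescaleFun_monomial, Finsupp.prod_zero_index, one_mul]

theorem inv_unique {M : Type*} [CommMonoid M] {p f g : M} (hf : p * f = 1) (hg : p * g = 1) :
    f = g :=
  left_inv_eq_right_inv (by rw [mul_comm]; exact hf) hg

/-- Key vanishing: over a characteristic-zero domain, the inverse of
`∏ (1 - C (a i) * X i ^ 2)` has vanishing coefficients at exponents with an odd coordinate. -/
theorem odd_coeff_eq_zero {σ : Type*} [DecidableEq σ] [Fintype σ] {A : Type*} [CommRing A]
    [IsDomain A] [CharZero A] (a : σ → A) (F : MvPowerSeries σ A)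
    (hF : (∏ i, (1 - C (a i) * (X i : MvPowerSeries σ A) ^ 2)) * F = 1)
    (e : σ →₀ ℕ) (i : σ) (hi : Odd (e i)) : MvPowerSeries.coeff e F = 0 := by
  classical
  set c : σ → A := Function.update (fun _ => (1 : A)) i (-1) with hc
  have hc2 : ∀ j, c j ^ 2 = 1 := by
    intro j
    by_cases h : j = i
    · subst h; simp [hc]
    · simp [hc, Function.update_of_ne h]
  set P : MvPowerSeries σ A := ∏ j, (1 - C (a j) * (X j : MvPowerSeries σ A) ^ 2) with hP
  have hfix : rescaleFun c P = P := by
    rw [hP]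
    have hfactor : ∀ j : σ,
        rescaleFun c (1 - C (a j) * (X j : MvPowerSeries σ A) ^ 2) =
          1 - C (a j) * (X j : MvPowerSeries σ A) ^ 2 := by
      intro j
      have hsub : ∀ (U V : MvPowerSeries σ A),
          rescaleFun c (U - V) = rescaleFun c U - rescaleFun c V := by
        intro U V; ext e
        rw [coeff_rescaleFun, map_sub, map_sub, coeff_rescaleFun, coeff_rescaleFun, mul_sub]
      have hps : ((Finsupp.single j 2).prod fun i k => c i ^ k) = c j ^ 2 :=
        Finsupp.prod_single_index (pow_zero _)
      rw [hsub, rescaleFun_one, rescaleFun_mul, rescaleFun_C, X_pow_eq,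
        rescaleFun_monomial, hps, hc2, one_mul, ← X_pow_eq]
    rw [show rescaleFun c (∏ j, (1 - C (a j) * (X j : MvPowerSeries σ A) ^ 2)) =
        ∏ j, rescaleFun c (1 - C (a j) * (X j : MvPowerSeries σ A) ^ 2) from ?_]
    · exact Finset.prod_congr rfl fun j _ => hfactor j
    · induction (Finset.univ : Finset σ) using Finset.induction with
      | empty => simp [rescaleFun_one]
      | insert _ _ hx ih =>
          rw [Finset.prod_insert hx, Finset.prod_insert hx, rescaleFun_mul, ih]
  have hres : P * rescaleFun c F = 1 := by
    rw [← hfix, ← rescaleFun_mul, hF, rescaleFun_one]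
  have hFF : rescaleFun c F = F := inv_unique hres hF
  have hcoe := congrArg (MvPowerSeries.coeff e) hFF
  rw [coeff_rescaleFun] at hcoe
  have hsupp : i ∈ e.support := Finsupp.mem_support_iff.mpr (by
    intro h0; rw [h0] at hi; exact (Nat.not_odd_iff_even.mpr Even.zero) hi)
  have hw : (e.prod fun j k => c j ^ k) = -1 := by
    rw [Finsupp.prod]
    rw [Finset.prod_eq_single_of_mem i hsupp (fun j _ hj => by
      simp [hc, Function.update_of_ne hj])]
    simp only [hc, Function.update_self]
    exact hi.neg_one_pow
  rw [hw, neg_one_mul] at hcoe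
  have h2 : (2 : A) * MvPowerSeries.coeff e F = 0 := by linear_combination -hcoe
  rcases mul_eq_zero.mp h2 with h | h
  · exact absurd h two_ne_zero
  · exact h

end ResidueAux

/-- Vanishing of the iterated residue for `LG(n)` when `λ` is not of the form
`2μ + ρ(n)`, i.e. when some `λ j + (n − 1 − j)` is even. -/
theorem residue_schur_LG_vanishing (R : Type*) [CommRing R] (n : ℕ) (hn : 1 ≤ n)
    (t : Fin n → R) (F : MvPowerSeries (Fin n) R)
    (hF : (∏ i, (1 - MvPowerSeries.C (σ := Fin n) (R := R) ((t i) ^ 2) * (MvPowerSeries.X i) ^ 2)) * F = 1)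
    (lam : Fin n → ℕ) (hlam : Antitone lam)
    (hpar : ∃ j : Fin n, Even (lam j + (n - 1 - (j : ℕ)))) :
    ∑ σ : Equiv.Perm (Fin n),
      ((Equiv.Perm.sign σ : ℤ) : R) *
        MvPowerSeries.coeff (R := R)
          (Finsupp.equivFunOnFinite.symm fun i => lam (σ⁻¹ i) + (n - 1 - ((σ⁻¹ i : Fin n) : ℕ)))
          ((∏ i, MvPowerSeries.X i) * F)
      = 0 := by
  classical
  obtain ⟨j, hj⟩ := hpar
  -- universal coefficients
  have hg : True := trivial
  set P₀ : MvPowerSeries (Fin n) (MvPolynomial (Fin n) ℤ) :=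
    ∏ i, (1 - MvPowerSeries.C (MvPolynomial.X i ^ 2) *
      (MvPowerSeries.X i : MvPowerSeries (Fin n) (MvPolynomial (Fin n) ℤ)) ^ 2) with hP₀
  have hconst : MvPowerSeries.constantCoeff P₀ = 1 := by
    rw [hP₀, map_prod]
    refine Finset.prod_eq_one fun i _ => ?_
    simp [MvPowerSeries.constantCoeff_X]
  set F₀ : MvPowerSeries (Fin n) (MvPolynomial (Fin n) ℤ) := MvPowerSeries.invOfUnit P₀ 1 with hF₀
  have hPF₀ : P₀ * F₀ = 1 := MvPowerSeries.mul_invOfUnit P₀ 1 (by rw [hconst]; rfl)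
  -- F₀ has odd-coefficient vanishing
  have hodd : ∀ (e : Fin n →₀ ℕ) (i : Fin n), Odd (e i) → MvPowerSeries.coeff e F₀ = 0 :=
    fun e i hi => ResidueAux.odd_coeff_eq_zero (fun i => MvPolynomial.X i ^ 2) F₀ hPF₀ e i hi
  -- F is the image of F₀
  have hmapP : MvPowerSeries.map (MvPolynomial.eval₂Hom (Int.castRingHom R) t) P₀ =
      ∏ i, (1 - MvPowerSeries.C (σ := Fin n) (R := R) ((t i) ^ 2) * (MvPowerSeries.X i) ^ 2) := by
    rw [hP₀, map_prod]
    refine Finset.prod_congr rfl fun i _ => ?_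
    simp [map_sub, map_mul, map_pow, MvPowerSeries.map_C, MvPowerSeries.map_X,
      MvPolynomial.eval₂Hom_X']
  have hmapF : (∏ i, (1 - MvPowerSeries.C (σ := Fin n) (R := R) ((t i) ^ 2) * (MvPowerSeries.X i) ^ 2)) *
      MvPowerSeries.map (MvPolynomial.eval₂Hom (Int.castRingHom R) t) F₀ = 1 := by
    rw [← hmapP, ← map_mul, hPF₀, map_one]
  have hFeq : F = MvPowerSeries.map (MvPolynomial.eval₂Hom (Int.castRingHom R) t) F₀ := ResidueAux.inv_unique hF hmapF
  have hFcoeff : ∀ (e : Fin n →₀ ℕ) (i : Fin n), Odd (e i) → MvPowerSeries.coeff e F = 0 := by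
    intro e i hi
    rw [hFeq, MvPowerSeries.coeff_map, hodd e i hi, map_zero]
  -- the product of X's is a monomial
  set d : Fin n →₀ ℕ := ∑ i, Finsupp.single i 1 with hd
  have hdapp : ∀ k, d k = 1 := by
    intro k
    simp [hd, Finsupp.finset_sum_apply, Finsupp.single_apply]
  have hprodX : (∏ i, (MvPowerSeries.X i : MvPowerSeries (Fin n) R)) =
      MvPowerSeries.monomial d 1 := by
    rw [hd]
    induction (Finset.univ : Finset (Fin n)) using Finset.induction with
    | empty =>
        rw [Finset.prod_empty, Finset.sum_empty, MvPowerSeries.monomial_zero_eq_C_apply, map_one]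
    | insert _ _ hx ih =>
        rw [Finset.prod_insert hx, Finset.sum_insert hx, ih, MvPowerSeries.X_def,
          MvPowerSeries.monomial_mul_monomial, one_mul]
  -- now each summand vanishes
  refine Finset.sum_eq_zero fun σ _ => ?_
  set e : Fin n →₀ ℕ :=
    Finsupp.equivFunOnFinite.symm fun i => lam (σ⁻¹ i) + (n - 1 - ((σ⁻¹ i : Fin n) : ℕ)) with he
  have hesj : e (σ j) = lam j + (n - 1 - (j : ℕ)) := by
    have h0 : e (σ j) = lam (σ⁻¹ (σ j)) + (n - 1 - ((σ⁻¹ (σ j) : Fin n) : ℕ)) := rfl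
    rw [h0, ← Equiv.Perm.mul_apply, inv_mul_cancel, Equiv.Perm.one_apply]
  rw [hprodX, MvPowerSeries.coeff_monomial_mul]
  by_cases hle : d ≤ e
  · have h1 : 1 ≤ e (σ j) := le_trans (le_of_eq (hdapp (σ j)).symm) (hle (σ j))
    have hjE : Even (e (σ j)) := by rw [hesj]; exact hj
    have hodd' : Odd ((e - d) (σ j)) := by
      rw [Finsupp.tsub_apply, hdapp]
      exact Nat.Even.sub_odd h1 hjE odd_one
    rw [if_pos hle, hFcoeff (e - d) (σ j) hodd', mul_zero, mul_zero]
  · rw [if_neg hle, mul_zero]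
end

section
/- Let n ≥ 1 and let λ : Fin n → ℕ be antitone. Then λ j + (n − 1 − j) is odd for every j ∈ Fin n if and only if there exists an antitone μ : Fin n → ℕ such that λ j = 2·μ j + (n − j) for every j. (The residue can be nonzero only when λ = 2μ + ρ(n) for some partition μ; antitonicity of μ is automatic from the parity condition and antitonicity of λ.) -/
/-- For an antitone `λ : Fin n → ℕ`, all `λ j + (n − 1 − j)` are odd iff
`λ = 2μ + ρ(n)` for some antitone `μ`, where `ρ(n) j = n − j`. -/
theorem parity_iff_staircase (n : ℕ) (hn : 1 ≤ n)
    (lam : Fin n → ℕ) (hlam : Antitone lam) :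
    (∀ j : Fin n, Odd (lam j + (n - 1 - (j : ℕ)))) ↔
      ∃ μ : Fin n → ℕ, Antitone μ ∧ ∀ j : Fin n, lam j = 2 * μ j + (n - (j : ℕ)) := by
  constructor
  · intro hodd
    -- strict step
    have hstep : ∀ j k : Fin n, (j : ℕ) + 1 = (k : ℕ) → lam k + 1 ≤ lam j := by
      intro j k hjk
      have hle : lam k ≤ lam j := hlam (by omega : j ≤ k)
      have h1 := hodd j
      have h2 := hodd k
      rw [Nat.odd_iff] at h1 h2
      have hk : (k : ℕ) < n := k.isLt
      omega
    have hgap : ∀ d : ℕ, ∀ j k : Fin n, (j : ℕ) + d = (k : ℕ) → lam k + d ≤ lam j := by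
      intro d
      induction d with
      | zero => intro j k h; have hjk : j = k := Fin.ext (by omega); rw [hjk]; omega
      | succ m ih =>
        intro j k h
        have hj1 : (j : ℕ) + 1 < n := by have := k.isLt; omega
        have ha := ih ⟨(j : ℕ) + 1, hj1⟩ k (by simp; omega)
        have hb := hstep j ⟨(j : ℕ) + 1, hj1⟩ (by simp)
        omega
    have hge : ∀ j : Fin n, n - (j : ℕ) ≤ lam j := by
      intro j
      have hlast : (n - 1 : ℕ) < n := by omega
      have h1 := hodd ⟨n - 1, hlast⟩
      rw [Nat.odd_iff] at h1
      simp only at h1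
      have hl1 : 1 ≤ lam ⟨n - 1, hlast⟩ := by omega
      have := hgap (n - 1 - (j : ℕ)) j ⟨n - 1, hlast⟩ (by have := j.isLt; simp; omega)
      have := j.isLt
      omega
    refine ⟨fun j => (lam j - (n - (j : ℕ))) / 2, ?_, ?_⟩
    · intro j k hjk
      have hg := hgap ((k : ℕ) - (j : ℕ)) j k (by omega)
      have h1 := hodd j
      have h2 := hodd k
      rw [Nat.odd_iff] at h1 h2
      have hj := j.isLt
      have hk := k.isLt
      have hgj := hge j
      have hgk := hge k
      have hjk' : (j : ℕ) ≤ (k : ℕ) := hjk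
      simp only
      omega
    · intro j
      have h1 := hodd j
      rw [Nat.odd_iff] at h1
      have hj := j.isLt
      have := hge j
      simp only
      omega
  · rintro ⟨μ, hμ, hm⟩ j
    rw [Nat.odd_iff, hm j]
    have := j.isLt
    omega
end

section
/- Let n ≥ 1 and let μ : Fin n → ℕ be antitone. In the polynomial ring MvPolynomial (Fin n) ℤ, the Vandermonde product ∏_{i<j} (X j − X i) divides the determinant of the n×n matrix with entries (i,j) ↦ (X i)^(μ j + (n − 1 − j)), and the quotient polynomial is symmetric, i.e. invariant under every permutation of the variables. (Well-definedness of the Jacobi bialternant definition of the Schur polynomial s_μ.) -/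
open Finset

namespace JacobiAux

open MvPolynomial Matrix Equiv

variable {n : ℕ}

lemma prime_X_sub_X {i j : Fin n} (h : i ≠ j) :
    Prime (X j - X i : MvPolynomial (Fin n) ℤ) := by
  classical
  let e : MvPolynomial (Fin n) ℤ ≃ₐ[ℤ] Polynomial (MvPolynomial {k : Fin n // k ≠ j} ℤ) :=
    (renameEquiv ℤ (Equiv.optionSubtypeNe j).symm).trans
      (optionEquivLeft ℤ {k : Fin n // k ≠ j})
  rw [← MulEquiv.prime_iff e.toMulEquiv]
  have he : e (X j - X i) = Polynomial.X - Polynomial.C (X ⟨i, h⟩) := by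
    simp only [e, map_sub, AlgEquiv.trans_apply, renameEquiv_apply, rename_X,
      Equiv.optionSubtypeNe_symm_self, Equiv.optionSubtypeNe_symm_of_ne h,
      optionEquivLeft_X_none, optionEquivLeft_X_some]
  show Prime (e (X j - X i))
  rw [he]
  exact Polynomial.prime_X_sub_C _

lemma not_dvd_X_sub_X {i j k l : Fin n} (hij : i < j) (hkl : k < l)
    (hne : ¬(i = k ∧ j = l)) :
    ¬ (X j - X i : MvPolynomial (Fin n) ℤ) ∣ (X l - X k) := by
  intro hd
  by_cases hl : l = i ∨ l = j
  · by_cases hk : k = i ∨ k = j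
    · rcases hl with rfl | rfl
      · rcases hk with rfl | rfl
        · exact absurd hkl (lt_irrefl _)
        · exact absurd (hij.trans hkl) (lt_irrefl _)
      · rcases hk with rfl | rfl
        · exact hne ⟨rfl, rfl⟩
        · exact absurd hkl (lt_irrefl _)
    · push_neg at hk
      have h2 := map_dvd (eval (fun m : Fin n => if m = k then (1:ℤ) else 0)) hd
      simp only [map_sub, eval_X, if_pos rfl, if_neg (Ne.symm hk.1), if_neg (Ne.symm hk.2),
        if_neg hkl.ne'] at h2
      norm_num at h2
  · push_neg at hl
    have h2 := map_dvd (eval (fun m : Fin n => if m = l then (1:ℤ) else 0)) hd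
    simp only [map_sub, eval_X, if_pos rfl, if_neg (Ne.symm hl.1), if_neg (Ne.symm hl.2),
      if_neg hkl.ne] at h2
    norm_num at h2

lemma dvd_sub_aeval (g : Fin n → MvPolynomial (Fin n) ℤ) (d : MvPolynomial (Fin n) ℤ)
    (hg : ∀ k, d ∣ (X k - g k)) (f : MvPolynomial (Fin n) ℤ) :
    d ∣ f - aeval g f := by
  induction f using MvPolynomial.induction_on with
  | C a => simp
  | add p q hp hq =>
      have h : p + q - (aeval g p + aeval g q) = (p - aeval g p) + (q - aeval g q) := by ring
      rw [_root_.map_add, h]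
      exact dvd_add hp hq
  | mul_X p k hp =>
      rw [_root_.map_mul, aeval_X]
      have h : p * X k - aeval g p * g k
          = (p - aeval g p) * X k + aeval g p * (X k - g k) := by ring
      rw [h]
      exact dvd_add (hp.mul_right _) ((hg k).mul_left _)

end JacobiAux

open JacobiAux MvPolynomial Matrix Equiv in
/-- Well-definedness of the Jacobi bialternant definition of the Schur polynomial:
the Vandermonde product `∏_{i<j} (X j − X i)` divides
`det((i,j) ↦ (X i)^(μ j + n − 1 − j))` in `MvPolynomial (Fin n) ℤ`,
and the quotient is a symmetric polynomial. -/
theorem jacobi_bialternant_well_defined (n : ℕ) (hn : 1 ≤ n)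
    (μ : Fin n → ℕ) (hμ : Antitone μ) :
    ∃ S : MvPolynomial (Fin n) ℤ,
      (Matrix.of fun i j : Fin n =>
          (MvPolynomial.X i : MvPolynomial (Fin n) ℤ) ^ (μ j + (n - 1 - (j : ℕ)))).det
        = (∏ i, ∏ j ∈ Ioi i, (MvPolynomial.X j - MvPolynomial.X i)) * S
      ∧ S.IsSymmetric := by
  classical
  set e : Fin n → ℕ := fun j => μ j + (n - 1 - (j : ℕ)) with he
  set M : Matrix (Fin n) (Fin n) (MvPolynomial (Fin n) ℤ) :=
    Matrix.of fun i j : Fin n => (X i : MvPolynomial (Fin n) ℤ) ^ (e j) with hM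
  set V : MvPolynomial (Fin n) ℤ := ∏ i, ∏ j ∈ Ioi i, (X j - X i) with hV
  -- each linear factor divides the determinant
  have hfac : ∀ i j : Fin n, i < j → (X j - X i : MvPolynomial (Fin n) ℤ) ∣ M.det := by
    intro i j hij
    set g : Fin n → MvPolynomial (Fin n) ℤ := fun k => if k = i then X j else X k with hg
    have h0 : aeval g M.det = 0 := by
      rw [AlgHom.map_det]
      apply Matrix.det_zero_of_row_eq hij.ne
      funext j'
      simp [hM, hg, hij.ne']
    have h1 : (X i - X j : MvPolynomial (Fin n) ℤ) ∣ M.det := by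
      have h2 := dvd_sub_aeval g (X i - X j) (fun k => by
        by_cases hk : k = i
        · subst hk; simp [hg]
        · simp [hg, hk]) M.det
      rwa [h0, sub_zero] at h2
    rw [show (X j - X i : MvPolynomial (Fin n) ℤ) = -(X i - X j) by ring, neg_dvd]
    exact h1
  have hVdvd : V ∣ M.det := by
    have hs : V = ∏ p ∈ (Finset.univ.sigma fun i : Fin n => Ioi i),
        (X p.2 - X p.1 : MvPolynomial (Fin n) ℤ) := by
      rw [Finset.prod_sigma]
    rw [hs]
    apply Finset.prod_dvd_of_isRelPrime
    · intro p hp q hq hpq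
      simp only [Finset.mem_coe, Finset.mem_sigma, Finset.mem_univ, Finset.mem_Ioi,
        true_and] at hp hq
      refine ((prime_X_sub_X hp.ne).irreducible.isRelPrime_iff_not_dvd).mpr ?_
      refine not_dvd_X_sub_X hp hq ?_
      rintro ⟨h1, h2⟩
      exact hpq (Sigma.ext h1 (heq_of_eq h2))
    · intro p hp
      simp only [Finset.mem_sigma, Finset.mem_univ, Finset.mem_Ioi, true_and] at hp
      exact hfac _ _ hp
  obtain ⟨S, hS⟩ := hVdvd
  have hVne : V ≠ 0 := by
    rw [hV]
    apply Finset.prod_ne_zero_iff.mpr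
    intro i _
    apply Finset.prod_ne_zero_iff.mpr
    intro j hj
    rw [Finset.mem_Ioi] at hj
    exact (prime_X_sub_X hj.ne).ne_zero
  refine ⟨S, hS, ?_⟩
  intro σ
  -- the determinant is alternating
  have hD : rename σ M.det = ((Equiv.Perm.sign σ : ℤ) : MvPolynomial (Fin n) ℤ) * M.det := by
    rw [AlgHom.map_det]
    have : (rename σ : MvPolynomial (Fin n) ℤ →ₐ[ℤ] MvPolynomial (Fin n) ℤ).mapMatrix M
        = M.submatrix σ id := by
      ext i j
      simp [hM]
    rw [this, Matrix.det_permute]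
  -- the Vandermonde product is alternating
  have hVd : V = (Matrix.vandermonde fun i : Fin n => (X i : MvPolynomial (Fin n) ℤ)).det := by
    rw [Matrix.det_vandermonde]
  have hVp : rename σ V = ((Equiv.Perm.sign σ : ℤ) : MvPolynomial (Fin n) ℤ) * V := by
    rw [hVd, AlgHom.map_det]
    have : (rename σ : MvPolynomial (Fin n) ℤ →ₐ[ℤ] MvPolynomial (Fin n) ℤ).mapMatrix
          (Matrix.vandermonde fun i : Fin n => (X i : MvPolynomial (Fin n) ℤ))
        = (Matrix.vandermonde fun i : Fin n => (X i : MvPolynomial (Fin n) ℤ)).submatrix σ id := by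
      ext i j
      simp [Matrix.vandermonde]
    rw [this, Matrix.det_permute]
  have hsq : ((Equiv.Perm.sign σ : ℤ) : MvPolynomial (Fin n) ℤ)
      * ((Equiv.Perm.sign σ : ℤ) : MvPolynomial (Fin n) ℤ) = 1 := by
    rw [← Int.cast_mul, ← Units.val_mul, Int.units_mul_self, Units.val_one, Int.cast_one]
  have key : ((Equiv.Perm.sign σ : ℤ) : MvPolynomial (Fin n) ℤ) * (V * rename σ S)
      = ((Equiv.Perm.sign σ : ℤ) : MvPolynomial (Fin n) ℤ) * (V * S) := by
    have h3 : rename σ M.det = rename σ (V * S) := by rw [hS]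
    rw [hD, hS, _root_.map_mul, hVp] at h3
    linear_combination -h3
  have key2 : V * rename σ S = V * S := by
    have := congrArg (fun x => ((Equiv.Perm.sign σ : ℤ) : MvPolynomial (Fin n) ℤ) * x) key
    simpa [← mul_assoc, hsq] using this
  exact mul_left_cancel₀ hVne key2
end

section
/- Let K be a field of characteristic ≠ 2, n ≥ 1, and t : Fin n → K with t i ≠ 0 for all i and (t i)^2 ≠ (t j)^2 for all i ≠ j. Let μ : Fin n → ℕ be antitone and set λ j = 2·μ j + (n − j). Then the sum over all sign vectors ε of det(M_ε) / ( (∏ i, ε i·t i) · ∏_{i<j} (ε i·t i + ε j·t j)·(ε j·t j − ε i·t i) ), where (M_ε) i j = (ε i · t i)^(λ j + (n − 1 − j)), equals 2^n · det(N) / ∏_{i<j} ((t j)^2 − (t i)^2), where N i j = ((t i)^2)^(μ j + (n − 1 − j)). (Pragacz–Ratajski for the odd orthogonal Grassmannian OG(n, 2n+1): ω_* s_λ(Q) = 2^n · s_μ(t_1^2,…,t_n^2).) -/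
open Finset

/-- Pragacz–Ratajski for the odd orthogonal Grassmannian `OG(n, 2n+1)`:
for `λ = 2μ + ρ(n)`, the fixed-point sum for `s_λ(Q)` equals
`2^n · det((t_i²)^(μ_j + n − 1 − j)) / ∏_{i<j} (t_j² − t_i²)`. -/
theorem pushforward_schur_OG_odd (K : Type*) [Field K] (hK : (2 : K) ≠ 0)
    (n : ℕ) (hn : 1 ≤ n)
    (t : Fin n → K) (ht : ∀ i, t i ≠ 0)
    (ht2 : ∀ i j : Fin n, i ≠ j → (t i) ^ 2 ≠ (t j) ^ 2)
    (μ : Fin n → ℕ) (hμ : Antitone μ)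
    (lam : Fin n → ℕ) (hlam : ∀ j : Fin n, lam j = 2 * μ j + (n - (j : ℕ))) :
    ∑ s : Fin n → Bool,
      (Matrix.of fun i j : Fin n =>
          (sgnv (K := K) s i * t i) ^ (lam j + (n - 1 - (j : ℕ)))).det /
        ((∏ i, sgnv (K := K) s i * t i) *
          ∏ i, ∏ j ∈ Ioi i,
            (sgnv (K := K) s i * t i + sgnv (K := K) s j * t j) *
              (sgnv (K := K) s j * t j - sgnv (K := K) s i * t i))
      = 2 ^ n *
          (Matrix.of fun i j : Fin n => ((t i) ^ 2) ^ (μ j + (n - 1 - (j : ℕ)))).det /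
          ∏ i, ∏ j ∈ Ioi i, ((t j) ^ 2 - (t i) ^ 2) := by
  have key : ∀ s : Fin n → Bool,
      (Matrix.of fun i j : Fin n =>
          (sgnv (K := K) s i * t i) ^ (lam j + (n - 1 - (j : ℕ)))).det /
        ((∏ i, sgnv (K := K) s i * t i) *
          ∏ i, ∏ j ∈ Ioi i,
            (sgnv (K := K) s i * t i + sgnv (K := K) s j * t j) *
              (sgnv (K := K) s j * t j - sgnv (K := K) s i * t i))
      = (Matrix.of fun i j : Fin n => ((t i) ^ 2) ^ (μ j + (n - 1 - (j : ℕ)))).det /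
          ∏ i, ∏ j ∈ Ioi i, ((t j) ^ 2 - (t i) ^ 2) := by
    intro s
    set x : Fin n → K := fun i => sgnv (K := K) s i * t i with hx
    have hx2 : ∀ i, x i ^ 2 = t i ^ 2 := by
      intro i
      simp only [hx, sgnv, mul_pow]
      cases s i <;> simp
    have hxne : ∀ i, x i ≠ 0 := by
      intro i
      simp only [hx, sgnv]
      cases s i <;> simp [ht i]
    have hexp : ∀ j : Fin n, lam j + (n - 1 - (j : ℕ)) = 2 * (μ j + (n - 1 - (j : ℕ))) + 1 := by
      intro j
      have := j.isLt
      rw [hlam]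
      omega
    have hdet : (Matrix.of fun i j : Fin n => x i ^ (lam j + (n - 1 - (j : ℕ)))).det
        = (∏ i, x i) *
          (Matrix.of fun i j : Fin n => ((t i) ^ 2) ^ (μ j + (n - 1 - (j : ℕ)))).det := by
      have h1 : (Matrix.of fun i j : Fin n => x i ^ (lam j + (n - 1 - (j : ℕ))))
          = Matrix.of fun i j : Fin n =>
              x i * ((t i) ^ 2) ^ (μ j + (n - 1 - (j : ℕ))) := by
        ext i j
        simp only [Matrix.of_apply, hexp j, pow_succ, pow_mul, hx2 i]
        ring
      rw [h1]
      exact Matrix.det_mul_column x (Matrix.of fun i j : Fin n => ((t i) ^ 2) ^ (μ j + (n - 1 - (j : ℕ))))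
    have hden : (∏ i, ∏ j ∈ Ioi i, (x i + x j) * (x j - x i))
        = ∏ i, ∏ j ∈ Ioi i, ((t j) ^ 2 - (t i) ^ 2) := by
      refine Finset.prod_congr rfl fun i _ => Finset.prod_congr rfl fun j _ => ?_
      have h := hx2 i
      have h' := hx2 j
      linear_combination h' - h
    rw [hdet, hden, mul_div_mul_left _ _ (Finset.prod_ne_zero_iff.2 fun i _ => hxne i)]
  rw [Finset.sum_congr rfl fun s _ => key s, Finset.sum_const]
  simp only [Finset.card_univ, Fintype.card_fun, Fintype.card_bool, Fintype.card_fin,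
    nsmul_eq_mul, Nat.cast_pow, Nat.cast_ofNat]
  rw [mul_div_assoc]
end

section
/- Let K be a field of characteristic ≠ 2, n ≥ 1, and t : Fin n → K with t i ≠ 0 for all i and (t i)^2 ≠ (t j)^2 for all i ≠ j. Let λ : Fin n → ℕ be antitone and suppose there exists j ∈ Fin n such that λ j + (n − 1 − j) is even. Then the sum over all sign vectors ε of det(M_ε) / ( (∏ i, ε i·t i) · ∏_{i<j} (ε i·t i + ε j·t j)·(ε j·t j − ε i·t i) ), where (M_ε) i j = (ε i · t i)^(λ j + (n − 1 − j)), equals 0. (Vanishing part of the Pragacz–Ratajski theorem for OG(n, 2n+1): the push-forward of s_λ(Q) is nonzero only if λ = 2μ + ρ(n).) -/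
open Finset

lemma sgnv_sq {K : Type*} [Ring K] {n : ℕ} (s : Fin n → Bool) (i : Fin n) :
    sgnv (K := K) s i * sgnv (K := K) s i = 1 := by
  unfold sgnv; cases s i <;> simp

/-- Key vanishing lemma for the numerator sum. -/
lemma key_vanish (K : Type*) [Field K] (n : ℕ) (t : Fin n → K) (e : Fin n → ℕ)
    (j₀ : Fin n) (he : Even (e j₀)) :
    ∑ s : Fin n → Bool, (∏ i, sgnv (K := K) s i) *
      (Matrix.of fun i j : Fin n => (sgnv (K := K) s i * t i) ^ (e j)).det = 0 := by
  classical
  simp only [Matrix.det_apply', Matrix.of_apply, Finset.mul_sum]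
  rw [Finset.sum_comm]
  refine Finset.sum_eq_zero fun σ _ => ?_
  set i₀ : Fin n := σ j₀ with hi₀
  refine Finset.sum_ninvolution (fun s => Function.update s i₀ (! s i₀)) ?_ ?_
    (fun _ => Finset.mem_univ _) ?_
  · intro s
    set s' := Function.update s i₀ (! s i₀) with hs'
    have h1 : ∏ i, sgnv (K := K) s' i = - ∏ i, sgnv (K := K) s i := by
      rw [← Finset.mul_prod_erase univ _ (Finset.mem_univ i₀),
          ← Finset.mul_prod_erase univ (sgnv (K := K) s) (Finset.mem_univ i₀)]
      have : ∏ i ∈ univ.erase i₀, sgnv (K := K) s' i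
          = ∏ i ∈ univ.erase i₀, sgnv (K := K) s i := by
        refine Finset.prod_congr rfl fun i hi => ?_
        have : i ≠ i₀ := (Finset.mem_erase.mp hi).1
        simp [hs', sgnv, Function.update_of_ne this]
      rw [this]
      have : sgnv (K := K) s' i₀ = - sgnv (K := K) s i₀ := by
        simp only [hs', sgnv, Function.update_self]
        cases s i₀ <;> simp
      rw [this]; ring
    have h2 : ∏ i, (sgnv (K := K) s' (σ i) * t (σ i)) ^ e i
        = ∏ i, (sgnv (K := K) s (σ i) * t (σ i)) ^ e i := by
      rw [← Finset.mul_prod_erase univ _ (Finset.mem_univ j₀),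
          ← Finset.mul_prod_erase univ
            (fun i => (sgnv (K := K) s (σ i) * t (σ i)) ^ e i) (Finset.mem_univ j₀)]
      have hrest : ∏ i ∈ univ.erase j₀, (sgnv (K := K) s' (σ i) * t (σ i)) ^ e i
          = ∏ i ∈ univ.erase j₀, (sgnv (K := K) s (σ i) * t (σ i)) ^ e i := by
        refine Finset.prod_congr rfl fun i hi => ?_
        have hne : σ i ≠ i₀ := by
          simp only [hi₀]
          exact fun h => (Finset.mem_erase.mp hi).1 (σ.injective h)
        simp [hs', sgnv, Function.update_of_ne hne]
      rw [hrest]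
      have hval : sgnv (K := K) s' (σ j₀) = - sgnv (K := K) s (σ j₀) := by
        simp only [hs', ← hi₀, sgnv, Function.update_self]
        cases s i₀ <;> simp
      rw [hval, neg_mul, he.neg_pow]
    rw [h1, h2]; ring
  · intro s _h
    intro hcontra
    have := congrFun hcontra i₀
    simp [Function.update_self] at this
  · intro s
    simp [Function.update_idem, Function.update_self, Function.update_eq_self]

/-- Vanishing part of the Pragacz–Ratajski theorem for `OG(n, 2n+1)`:
if some `λ j + (n − 1 − j)` is even, the fixed-point sum for `s_λ(Q)` vanishes. -/
theorem pushforward_schur_OG_odd_vanishing (K : Type*) [Field K] (hK : (2 : K) ≠ 0)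
    (n : ℕ) (hn : 1 ≤ n)
    (t : Fin n → K) (ht : ∀ i, t i ≠ 0)
    (ht2 : ∀ i j : Fin n, i ≠ j → (t i) ^ 2 ≠ (t j) ^ 2)
    (lam : Fin n → ℕ) (hlam : Antitone lam)
    (hpar : ∃ j : Fin n, Even (lam j + (n - 1 - (j : ℕ)))) :
    ∑ s : Fin n → Bool,
      (Matrix.of fun i j : Fin n =>
          (sgnv (K := K) s i * t i) ^ (lam j + (n - 1 - (j : ℕ)))).det /
        ((∏ i, sgnv (K := K) s i * t i) *
          ∏ i, ∏ j ∈ Ioi i,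
            (sgnv (K := K) s i * t i + sgnv (K := K) s j * t j) *
              (sgnv (K := K) s j * t j - sgnv (K := K) s i * t i))
      = 0 := by
  classical
  set e : Fin n → ℕ := fun j => lam j + (n - 1 - (j : ℕ)) with he
  set P : K := (∏ i, t i) * ∏ i, ∏ j ∈ Ioi i, (t j ^ 2 - t i ^ 2) with hP
  have hPne : P ≠ 0 := by
    apply mul_ne_zero
    · exact Finset.prod_ne_zero_iff.mpr fun i _ => ht i
    · refine Finset.prod_ne_zero_iff.mpr fun i _ => ?_
      refine Finset.prod_ne_zero_iff.mpr fun j hj => ?_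
      have hij : i ≠ j := ne_of_lt (Finset.mem_Ioi.mp hj)
      exact sub_ne_zero.mpr fun h => ht2 j i (Ne.symm hij) h
  have hterm : ∀ s : Fin n → Bool,
      (Matrix.of fun i j : Fin n =>
          (sgnv (K := K) s i * t i) ^ (e j)).det /
        ((∏ i, sgnv (K := K) s i * t i) *
          ∏ i, ∏ j ∈ Ioi i,
            (sgnv (K := K) s i * t i + sgnv (K := K) s j * t j) *
              (sgnv (K := K) s j * t j - sgnv (K := K) s i * t i))
      = ((∏ i, sgnv (K := K) s i) *
          (Matrix.of fun i j : Fin n => (sgnv (K := K) s i * t i) ^ (e j)).det) / P := by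
    intro s
    have hps : (∏ i, sgnv (K := K) s i) * (∏ i, sgnv (K := K) s i) = 1 := by
      rw [← Finset.prod_mul_distrib]
      exact Finset.prod_eq_one fun i _ => sgnv_sq s i
    have hpne : (∏ i, sgnv (K := K) s i) ≠ 0 :=
      left_ne_zero_of_mul_eq_one hps
    have hden : (∏ i, sgnv (K := K) s i * t i) *
          ∏ i, ∏ j ∈ Ioi i,
            (sgnv (K := K) s i * t i + sgnv (K := K) s j * t j) *
              (sgnv (K := K) s j * t j - sgnv (K := K) s i * t i)
        = (∏ i, sgnv (K := K) s i) * P := by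
      rw [Finset.prod_mul_distrib]
      have hin : ∀ i, ∏ j ∈ Ioi i,
            (sgnv (K := K) s i * t i + sgnv (K := K) s j * t j) *
              (sgnv (K := K) s j * t j - sgnv (K := K) s i * t i)
          = ∏ j ∈ Ioi i, (t j ^ 2 - t i ^ 2) := by
        intro i
        refine Finset.prod_congr rfl fun j _ => ?_
        have h1 := sgnv_sq (K := K) s i
        have h2 := sgnv_sq (K := K) s j
        linear_combination (t j ^ 2) * h2 - (t i ^ 2) * h1
      rw [hP]
      rw [Finset.prod_congr rfl fun i _ => hin i]
      ring
    rw [hden, div_eq_div_iff (mul_ne_zero hpne hPne) hPne]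
    rw [show ((∏ i, sgnv (K := K) s i) *
        (Matrix.of fun i j : Fin n => (sgnv (K := K) s i * t i) ^ (e j)).det) *
        ((∏ i, sgnv (K := K) s i) * P)
      = ((∏ i, sgnv (K := K) s i) * ∏ i, sgnv (K := K) s i) *
        ((Matrix.of fun i j : Fin n => (sgnv (K := K) s i * t i) ^ (e j)).det * P) by ring,
      hps, one_mul]
  calc ∑ s : Fin n → Bool,
      (Matrix.of fun i j : Fin n =>
          (sgnv (K := K) s i * t i) ^ (e j)).det /
        ((∏ i, sgnv (K := K) s i * t i) *
          ∏ i, ∏ j ∈ Ioi i,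
            (sgnv (K := K) s i * t i + sgnv (K := K) s j * t j) *
              (sgnv (K := K) s j * t j - sgnv (K := K) s i * t i))
      = ∑ s : Fin n → Bool, ((∏ i, sgnv (K := K) s i) *
          (Matrix.of fun i j : Fin n => (sgnv (K := K) s i * t i) ^ (e j)).det) / P :=
        Finset.sum_congr rfl fun s _ => hterm s
    _ = (∑ s : Fin n → Bool, (∏ i, sgnv (K := K) s i) *
          (Matrix.of fun i j : Fin n => (sgnv (K := K) s i * t i) ^ (e j)).det) / P :=
        (Finset.sum_div _ _ _).symm
    _ = 0 := by
        obtain ⟨j₀, hj₀⟩ := hpar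
        rw [key_vanish K n t e j₀ hj₀, zero_div]
end

section
/- Let R be a commutative ring, n ≥ 1, t : Fin n → R, and let F be the formal power series in MvPowerSeries (Fin n) R determined by (∏ i, (1 − (t i)^2·(X i)^2)) * F = 1. Let μ : Fin n → ℕ be antitone and set λ j = 2·μ j + (n − 1 − j) (i.e. λ = 2μ + ρ(n−1), where ρ(n−1) has parts n−1, n−2, …, 1, 0). For a permutation σ of Fin n let e_σ : Fin n →₀ ℕ be given by e_σ i = λ (σ⁻¹ i) + (n − 1 − σ⁻¹ i). Then 2^(n−1) · Σ_{σ ∈ Perm(Fin n)} sign(σ) · (coefficient of the monomial e_σ in F) = 2^(n−1) · det( (i,j) ↦ (t i)^(2·(μ j + (n − 1 − j))) ). (Iterated-residue evaluation of the push-forward of s_λ over the even orthogonal Grassmannian OG(n,2n): the extra factor 2^{n−1} z_1⋯z_n in the residue formula shifts every exponent by one, so the staircase ρ(n−1) replaces ρ(n), and ω_* s_λ(Q) = 2^{n−1}·s_μ(t^2)·(up to the Vandermonde-in-squares normalization).) -/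
open Finset

section Aux

variable {R : Type*} [CommRing R] {n : ℕ}

lemma monomial_prod_aux (S : Finset (Fin n)) (m : Fin n → (Fin n →₀ ℕ)) (a : Fin n → R) :
    ∏ i ∈ S, MvPowerSeries.monomial (m i) (a i)
      = MvPowerSeries.monomial (∑ i ∈ S, m i) (∏ i ∈ S, a i) := by
  classical
  induction S using Finset.cons_induction with
  | empty => simp [MvPowerSeries.monomial_zero_one]
  | cons i S hi ih =>
      rw [Finset.prod_cons, ih, Finset.sum_cons, Finset.prod_cons,
        MvPowerSeries.monomial_mul_monomial]

/-- The explicit inverse series `∏ i, 1/(1 - t_i^2 X_i^2)`. -/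
noncomputable def geomG (t : Fin n → R) : MvPowerSeries (Fin n) R :=
  fun e => if ∀ i, Even (e i) then ∏ i, t i ^ (e i) else 0

lemma coeff_geomG (t : Fin n → R) (e : Fin n →₀ ℕ) :
    MvPowerSeries.coeff e (geomG t)
      = if ∀ i, Even (e i) then ∏ i, t i ^ (e i) else 0 :=
  rfl

lemma sum_single_two_apply (S : Finset (Fin n)) (j : Fin n) :
    ((∑ i ∈ S, Finsupp.single i 2 : Fin n →₀ ℕ)) j = if j ∈ S then 2 else 0 := by
  classical
  rw [Finsupp.finset_sum_apply]
  simp [Finsupp.single_apply]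

lemma geomG_inv (t : Fin n → R) :
    (∏ i, (1 - (MvPowerSeries.C : R →+* MvPowerSeries (Fin n) R) ((t i) ^ 2) * (MvPowerSeries.X i) ^ 2)) * geomG t
      = 1 := by
  classical
  have hA : (∏ i, (1 - (MvPowerSeries.C : R →+* MvPowerSeries (Fin n) R) ((t i) ^ 2) * (MvPowerSeries.X i) ^ 2))
      = ∑ S ∈ (univ : Finset (Fin n)).powerset,
          MvPowerSeries.monomial (∑ i ∈ S, Finsupp.single i 2)
            ((-1) ^ S.card * ∏ i ∈ S, t i ^ 2) := by
    rw [Finset.prod_sub]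
    refine Finset.sum_congr rfl fun S _ => ?_
    have h1 : ∀ i : Fin n,
        (MvPowerSeries.C : R →+* MvPowerSeries (Fin n) R) (t i ^ 2) * MvPowerSeries.X i ^ 2
          = MvPowerSeries.monomial (Finsupp.single i 2) (t i ^ 2) := by
      intro i
      rw [MvPowerSeries.X_pow_eq, ← MvPowerSeries.monomial_zero_eq_C_apply,
        MvPowerSeries.monomial_mul_monomial, zero_add, mul_one]
    have hneg : (-1 : MvPowerSeries (Fin n) R) ^ S.card
        = MvPowerSeries.monomial (0 : Fin n →₀ ℕ) ((-1 : R) ^ S.card) := by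
      rw [show (-1 : MvPowerSeries (Fin n) R) = (MvPowerSeries.C : R →+* MvPowerSeries (Fin n) R) (-1) by
        rw [map_neg, map_one], ← map_pow, ← MvPowerSeries.monomial_zero_eq_C_apply]
    rw [Finset.prod_const_one, mul_one, Finset.prod_congr rfl (fun i _ => h1 i),
      monomial_prod_aux, hneg, MvPowerSeries.monomial_mul_monomial, zero_add]
  apply MvPowerSeries.ext
  intro e
  rw [hA, Finset.sum_mul, map_sum]
  simp only [MvPowerSeries.coeff_monomial_mul]
  by_cases h0 : e = 0
  · subst h0
    rw [Finset.sum_eq_single (∅ : Finset (Fin n))]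
    · simp [coeff_geomG, MvPowerSeries.coeff_one]
    · intro S _ hS
      rw [if_neg]
      intro hle
      obtain ⟨i, hi⟩ := Finset.nonempty_iff_ne_empty.2 hS
      have := hle i
      rw [sum_single_two_apply, if_pos hi] at this
      simp at this
    · simp
  · rw [MvPowerSeries.coeff_one, if_neg h0]
    by_cases heven : ∀ i, Even (e i)
    · -- all exponents even, e ≠ 0: terms telescope to (∑ (-1)^#S) * ∏ t^e = 0
      have hec : ∀ S : Finset (Fin n),
          (if (∑ i ∈ S, Finsupp.single i 2 : Fin n →₀ ℕ) ≤ e then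
              ((-1) ^ S.card * ∏ i ∈ S, t i ^ 2) *
                MvPowerSeries.coeff (e - ∑ i ∈ S, Finsupp.single i 2) (geomG t)
            else 0)
          = if S ⊆ e.support then ((-1 : R) ^ S.card) * ∏ i, t i ^ (e i) else 0 := by
        intro S
        by_cases hsub : S ⊆ e.support
        · have hle : (∑ i ∈ S, Finsupp.single i 2 : Fin n →₀ ℕ) ≤ e := by
            intro j
            rw [sum_single_two_apply]
            by_cases hj : j ∈ S
            · rw [if_pos hj]
              have hj' : e j ≠ 0 := Finsupp.mem_support_iff.1 (hsub hj)
              have := heven j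
              rw [Nat.even_iff] at this
              omega
            · rw [if_neg hj]; exact Nat.zero_le _
          rw [if_pos hle, if_pos hsub, coeff_geomG, if_pos]
          · have hsubapp : ∀ j : Fin n,
                (e - ∑ i ∈ S, Finsupp.single i 2 : Fin n →₀ ℕ) j
                  = e j - (if j ∈ S then 2 else 0) := by
              intro j
              rw [Finsupp.tsub_apply, sum_single_two_apply]
            rw [mul_assoc]
            congr 1
            calc (∏ i ∈ S, t i ^ 2) *
                  ∏ i, t i ^ ((e - ∑ i ∈ S, Finsupp.single i 2 : Fin n →₀ ℕ) i)
                = (∏ i, t i ^ (if i ∈ S then 2 else 0)) *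
                  ∏ i, t i ^ (e i - (if i ∈ S then 2 else 0)) := by
                  congr 1
                  · rw [← Finset.prod_subset (Finset.subset_univ S)]
                    · exact Finset.prod_congr rfl fun i hi => by rw [if_pos hi]
                    · intro i _ hi; rw [if_neg hi, pow_zero]
                  · exact Finset.prod_congr rfl fun i _ => by rw [hsubapp]
              _ = ∏ i, t i ^ (e i) := by
                  rw [← Finset.prod_mul_distrib]
                  refine Finset.prod_congr rfl fun i _ => ?_
                  rw [← pow_add]
                  congr 1
                  have := hle i
                  rw [sum_single_two_apply] at this
                  omega
          · intro i
            have hsubapp : (e - ∑ i ∈ S, Finsupp.single i 2 : Fin n →₀ ℕ) i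
                = e i - (if i ∈ S then 2 else 0) := by
              rw [Finsupp.tsub_apply, sum_single_two_apply]
            rw [hsubapp]
            have := heven i
            rw [Nat.even_iff] at this ⊢
            have := hle i
            rw [sum_single_two_apply] at this
            split <;> omega
        · rw [if_neg hsub]
          rw [if_neg]
          intro hle
          apply hsub
          intro j hj
          have := hle j
          rw [sum_single_two_apply, if_pos hj] at this
          rw [Finsupp.mem_support_iff]
          omega
      rw [Finset.sum_congr rfl fun S _ => hec S]
      have hrw : ((univ : Finset (Fin n)).powerset.filter (· ⊆ e.support)) = e.support.powerset := by
        ext S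
        simp [Finset.mem_powerset]
      have hsupp : e.support.Nonempty := by
        rw [Finsupp.support_nonempty_iff]; exact h0
      have hz : ∑ S ∈ e.support.powerset, ((-1 : R) ^ S.card) * ∏ i, t i ^ (e i) = 0 := by
        rw [← Finset.sum_mul]
        have : (∑ S ∈ e.support.powerset, (-1 : R) ^ S.card) = 0 := by
          have h := Finset.sum_powerset_neg_one_pow_card_of_nonempty hsupp
          have h2 : ((∑ m ∈ e.support.powerset, (-1 : ℤ) ^ m.card : ℤ) : R) = ((0 : ℤ) : R) := by
            rw [h]
          push_cast at h2
          exact h2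
        rw [this, zero_mul]
      rw [← Finset.sum_filter, hrw]
      exact hz
    · -- some exponent odd: every coefficient of geomG vanishes
      apply Finset.sum_eq_zero
      intro S _
      split
      · next hle =>
        rw [coeff_geomG, if_neg, mul_zero]
        intro hall
        apply heven
        intro i
        have h1 := hall i
        have h2 := hle i
        rw [Finsupp.tsub_apply, sum_single_two_apply] at h1
        rw [sum_single_two_apply] at h2
        rw [Nat.even_iff] at h1 ⊢
        split at h1 <;> [skip; simpa using h1] <;> rw [if_pos ‹_›] at h2 <;> omega
      · rfl

end Aux

/-- Iterated-residue evaluation of the push-forward of `s_λ` over the even orthogonal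
Grassmannian `OG(n, 2n)` for `λ = 2μ + ρ(n−1)`: the signed sum of coefficients of `F`
(times `2^(n−1)`) equals `2^(n−1) · det((t_i)^(2(μ_j + n − 1 − j)))`. -/
theorem residue_schur_OG_even (R : Type*) [CommRing R] (n : ℕ) (hn : 1 ≤ n)
    (t : Fin n → R) (F : MvPowerSeries (Fin n) R)
    (hF : (∏ i, (1 - (MvPowerSeries.C : R →+* MvPowerSeries (Fin n) R) ((t i) ^ 2) * (MvPowerSeries.X i) ^ 2)) * F = 1)
    (μ : Fin n → ℕ) (hμ : Antitone μ)
    (lam : Fin n → ℕ) (hlam : ∀ j : Fin n, lam j = 2 * μ j + (n - 1 - (j : ℕ))) :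
    (2 : R) ^ (n - 1) *
        ∑ σ : Equiv.Perm (Fin n),
          ((Equiv.Perm.sign σ : ℤ) : R) *
            MvPowerSeries.coeff
              (Finsupp.equivFunOnFinite.symm fun i =>
                lam (σ⁻¹ i) + (n - 1 - ((σ⁻¹ i : Fin n) : ℕ))) F
      = (2 : R) ^ (n - 1) *
          (Matrix.of fun i j : Fin n => (t i) ^ (2 * (μ j + (n - 1 - (j : ℕ))))).det := by
  classical
  -- F equals the explicit geometric series
  have hFG : F = geomG t := by
    have h1 := geomG_inv t
    calc F = 1 * F := (one_mul F).symm
      _ = ((∏ i, (1 - (MvPowerSeries.C : R →+* MvPowerSeries (Fin n) R) ((t i) ^ 2) * (MvPowerSeries.X i) ^ 2)) *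
            geomG t) * F := by rw [h1]
      _ = ((∏ i, (1 - (MvPowerSeries.C : R →+* MvPowerSeries (Fin n) R) ((t i) ^ 2) * (MvPowerSeries.X i) ^ 2)) * F) *
            geomG t := by ring
      _ = geomG t := by rw [hF, one_mul]
  subst hFG
  congr 1
  rw [Matrix.det_apply']
  apply Finset.sum_congr rfl
  intro σ _
  congr 1
  -- the coefficient of geomG at the shifted exponent
  have heapp : ∀ i : Fin n,
      ((Finsupp.equivFunOnFinite.symm fun i =>
        lam (σ⁻¹ i) + (n - 1 - ((σ⁻¹ i : Fin n) : ℕ))) : Fin n →₀ ℕ) i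
        = 2 * (μ (σ⁻¹ i) + (n - 1 - ((σ⁻¹ i : Fin n) : ℕ))) := by
    intro i
    have : ((Finsupp.equivFunOnFinite.symm fun i =>
        lam (σ⁻¹ i) + (n - 1 - ((σ⁻¹ i : Fin n) : ℕ))) : Fin n →₀ ℕ) i
        = lam (σ⁻¹ i) + (n - 1 - ((σ⁻¹ i : Fin n) : ℕ)) := rfl
    rw [this, hlam]
    ring
  rw [coeff_geomG, if_pos]
  · have hprod : (∏ i, t i ^
        (((Finsupp.equivFunOnFinite.symm fun i =>
          lam (σ⁻¹ i) + (n - 1 - ((σ⁻¹ i : Fin n) : ℕ))) : Fin n →₀ ℕ) i))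
        = ∏ i, t i ^ (2 * (μ (σ⁻¹ i) + (n - 1 - ((σ⁻¹ i : Fin n) : ℕ)))) := by
      exact Finset.prod_congr rfl fun i _ => by rw [heapp]
    rw [hprod]
    -- reindex the product by σ
    have := Equiv.prod_comp σ
      (fun i => t i ^ (2 * (μ (σ⁻¹ i) + (n - 1 - ((σ⁻¹ i : Fin n) : ℕ)))))
    rw [← this]
    refine Finset.prod_congr rfl fun j _ => ?_
    rw [Matrix.of_apply, Equiv.Perm.inv_def, Equiv.symm_apply_apply]
  · intro i
    rw [heapp]
    exact even_two_mul _
end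

section
/- Let R be a commutative ring, n ≥ 1, t : Fin n → R, and let F be the formal power series in MvPowerSeries (Fin n) R determined by (∏ i, (1 − (t i)^2·(X i)^2)) * F = 1. Let λ : Fin n → ℕ be antitone and suppose there exists j ∈ Fin n with λ j + (n − 1 − j) odd. For a permutation σ of Fin n let e_σ : Fin n →₀ ℕ be given by e_σ i = λ (σ⁻¹ i) + (n − 1 − σ⁻¹ i). Then Σ_{σ ∈ Perm(Fin n)} sign(σ) · (coefficient of the monomial e_σ in F) = 0. (Vanishing of the OG(n,2n) iterated residue when λ is not of the form 2μ + ρ(n−1).) -/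
open Finset

private lemma evenSupp_mul {σ' R : Type*} [CommRing R] {A B : MvPowerSeries σ' R}
    (hA : ∀ e : σ' →₀ ℕ, ¬ (∀ i, Even (e i)) → MvPowerSeries.coeff e A = 0)
    (hB : ∀ e : σ' →₀ ℕ, ¬ (∀ i, Even (e i)) → MvPowerSeries.coeff e B = 0) :
    ∀ e : σ' →₀ ℕ, ¬ (∀ i, Even (e i)) → MvPowerSeries.coeff e (A * B) = 0 := by
  classical
  intro e he
  rw [MvPowerSeries.coeff_mul]
  refine Finset.sum_eq_zero fun p hp => ?_
  rw [Finset.HasAntidiagonal.mem_antidiagonal] at hp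
  by_cases h1 : ∀ i, Even (p.1 i)
  · by_cases h2 : ∀ i, Even (p.2 i)
    · exact absurd (fun i => by
        have : e i = p.1 i + p.2 i := by rw [← hp]; rfl
        rw [this]; exact (h1 i).add (h2 i)) he
    · rw [hB _ h2, mul_zero]
  · rw [hA _ h1, zero_mul]

private lemma evenSupp_one {σ' R : Type*} [CommRing R] :
    ∀ e : σ' →₀ ℕ, ¬ (∀ i, Even (e i)) → MvPowerSeries.coeff e (1 : MvPowerSeries σ' R) = 0 := by
  classical
  intro e he
  rw [MvPowerSeries.coeff_one, if_neg]
  rintro rfl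
  exact he fun i => by simp

private lemma evenSupp_factor {σ' R : Type*} [CommRing R] (c : R) (i : σ') :
    ∀ e : σ' →₀ ℕ, ¬ (∀ i, Even (e i)) →
      MvPowerSeries.coeff e
        (1 - MvPowerSeries.C c * (MvPowerSeries.X i) ^ 2) = 0 := by
  classical
  intro e he
  rw [map_sub, evenSupp_one e he, MvPowerSeries.X_pow_eq, zero_sub, neg_eq_zero,
    MvPowerSeries.coeff_C_mul, MvPowerSeries.coeff_monomial, if_neg, mul_zero]
  rintro rfl
  refine he fun j => ?_
  by_cases hj : j = i
  · subst hj; simp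
  · simp [Finsupp.single_apply, hj, Ne.symm hj]

/-- Vanishing of the `OG(n, 2n)` iterated residue when `λ` is not of the form
`2μ + ρ(n−1)`, i.e. when some `λ j + (n − 1 − j)` is odd. -/
theorem residue_schur_OG_even_vanishing (R : Type*) [CommRing R] (n : ℕ) (hn : 1 ≤ n)
    (t : Fin n → R) (F : MvPowerSeries (Fin n) R)
    (hF : (∏ i, (1 - MvPowerSeries.C ((t i) ^ 2) * (MvPowerSeries.X i) ^ 2)) * F = 1)
    (lam : Fin n → ℕ) (hlam : Antitone lam)
    (hpar : ∃ j : Fin n, Odd (lam j + (n - 1 - (j : ℕ)))) :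
    ∑ σ : Equiv.Perm (Fin n),
      ((Equiv.Perm.sign σ : ℤ) : R) *
        MvPowerSeries.coeff
          (Finsupp.equivFunOnFinite.symm fun i =>
            lam (σ⁻¹ i) + (n - 1 - ((σ⁻¹ i : Fin n) : ℕ))) F
      = 0 := by
  classical
  set a : MvPowerSeries (Fin n) R :=
    ∏ i, (1 - MvPowerSeries.C ((t i) ^ 2) * (MvPowerSeries.X i) ^ 2) with ha
  have hEa : ∀ e : Fin n →₀ ℕ, ¬ (∀ i, Even (e i)) → MvPowerSeries.coeff e a = 0 := by
    rw [ha]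
    refine Finset.prod_induction _
      (fun A => ∀ e : Fin n →₀ ℕ, ¬ (∀ i, Even (e i)) → MvPowerSeries.coeff e A = 0)
      (fun A B hA hB => evenSupp_mul hA hB) evenSupp_one ?_
    intro i _
    exact evenSupp_factor _ i
  -- the even part of F
  set Fe : MvPowerSeries (Fin n) R :=
    (fun e => if ∀ i, Even (e i) then MvPowerSeries.coeff e F else 0 :
      (Fin n →₀ ℕ) → R) with hFe
  have hFeCoeff : ∀ e : Fin n →₀ ℕ,
      MvPowerSeries.coeff e Fe = if ∀ i, Even (e i) then MvPowerSeries.coeff e F else 0 := by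
    intro e; rw [MvPowerSeries.coeff_apply]
  have hEFe : ∀ e : Fin n →₀ ℕ, ¬ (∀ i, Even (e i)) → MvPowerSeries.coeff e Fe = 0 := by
    intro e he; rw [hFeCoeff, if_neg he]
  have key : a * (F - Fe) = 0 := by
    ext e
    rw [map_zero]
    by_cases he : ∀ i, Even (e i)
    · rw [MvPowerSeries.coeff_mul]
      refine Finset.sum_eq_zero fun p hp => ?_
      rw [Finset.HasAntidiagonal.mem_antidiagonal] at hp
      by_cases h1 : ∀ i, Even (p.1 i)
      · have h2 : ∀ i, Even (p.2 i) := by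
          intro i
          have hsum : e i = p.1 i + p.2 i := by rw [← hp]; rfl
          have := he i
          rw [hsum, Nat.even_add] at this
          exact this.mp (h1 i)
        rw [map_sub, hFeCoeff, if_pos h2, sub_self, mul_zero]
      · rw [hEa _ h1, zero_mul]
    · have : a * (F - Fe) = 1 - a * Fe := by rw [mul_sub, hF]
      rw [this, map_sub, evenSupp_one e he, zero_sub, neg_eq_zero,
        evenSupp_mul hEa hEFe e he]
  have hFodd : F - Fe = 0 := by
    have : F * (a * (F - Fe)) = F - Fe := by
      rw [← mul_assoc, mul_comm F a, hF, one_mul]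
    rw [← this, key, mul_zero]
  have hEF : ∀ e : Fin n →₀ ℕ, ¬ (∀ i, Even (e i)) → MvPowerSeries.coeff e F = 0 := by
    intro e he
    have := congrArg (MvPowerSeries.coeff e) hFodd
    rw [map_sub, map_zero, sub_eq_zero] at this
    rw [this, hEFe e he]
  refine Finset.sum_eq_zero fun σ _ => ?_
  rw [hEF, mul_zero]
  intro hall
  obtain ⟨j, hj⟩ := hpar
  have := hall (σ j)
  rw [Finsupp.equivFunOnFinite_symm_apply_apply] at this
  simp only [Equiv.Perm.inv_def, Equiv.symm_apply_apply] at this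
  exact (Nat.not_even_iff_odd.mpr hj) this
end

section
/- Let K be a field of characteristic ≠ 2, n ≥ 1, and t : Fin n → K with t i ≠ 0 for all i. Then for every polynomial W ∈ MvPolynomial (Fin n) K, the sum over all sign vectors ε of (evaluation of W at the point i ↦ ε i · t i) / (∏ i, 2·ε i·t i) equals Σ over those exponent vectors k in the support of W for which k i is odd for every i, of (coefficient of the monomial k in W) · ∏ i, (t i)^(k i − 1). (General push-forward formula of Section 4: only the monomials of W = V·∏_{i<j}(z_j − z_i) that are odd in every variable contribute to ∫_{LG(n)} V, each contributing its coefficient times ∏ t_i^{k_i − 1}; the full push-forward is this sum divided by ∏_{i<j}(t_j^2 − t_i^2).) -/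
open Finset

lemma bool_sum_key {K : Type*} [Field K] (h2 : (2 : K) ≠ 0) (t : K) (ht : t ≠ 0) (k : ℕ) :
    ∑ b : Bool, ((if b then (1:K) else -1) * t) ^ k * (2 * (if b then (1:K) else -1) * t)⁻¹
      = if Odd k then t ^ (k - 1) else 0 := by
  rw [Fintype.sum_bool]
  simp only [if_true, Bool.false_eq_true, if_false]
  rcases Nat.even_or_odd k with he | ho
  · rw [if_neg (Nat.not_odd_iff_even.mpr he)]
    have h1 : ((-1 : K) * t) ^ k = t ^ k := by
      rw [neg_one_mul, neg_pow, he.neg_one_pow, one_mul]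
    rw [h1, one_mul]
    field_simp
    ring
  · obtain ⟨m, rfl⟩ := ho
    rw [if_pos (show Odd (2 * m + 1) from ⟨m, rfl⟩)]
    have h1 : ((-1 : K) * t) ^ (2 * m + 1) = -(t ^ (2 * m + 1)) := by
      rw [neg_one_mul, neg_pow, Odd.neg_one_pow ⟨m, rfl⟩, neg_one_mul]
    rw [h1, one_mul]
    have h3 : 2 * m + 1 - 1 = 2 * m := rfl
    rw [h3]
    field_simp
    ring

/-- General push-forward formula of Section 4: only the monomials of `W` that are odd
in every variable contribute, each contributing its coefficient times `∏ i, t_i^(k_i − 1)`. -/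
theorem pushforward_general (K : Type*) [Field K] (hK : (2 : K) ≠ 0)
    (n : ℕ) (hn : 1 ≤ n)
    (t : Fin n → K) (ht : ∀ i, t i ≠ 0)
    (W : MvPolynomial (Fin n) K) :
    ∑ s : Fin n → Bool,
      MvPolynomial.eval (fun i => sgnv (K := K) s i * t i) W /
        ∏ i, 2 * sgnv (K := K) s i * t i
      = ∑ k ∈ W.support.filter (fun k => ∀ i, Odd (k i)),
          MvPolynomial.coeff k W * ∏ i, (t i) ^ (k i - 1) := by
  have step1 : ∀ s : Fin n → Bool,
      MvPolynomial.eval (fun i => sgnv (K := K) s i * t i) W /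
        ∏ i, 2 * sgnv (K := K) s i * t i
      = ∑ k ∈ W.support, MvPolynomial.coeff k W *
          ∏ i, ((sgnv (K := K) s i * t i) ^ (k i) * (2 * sgnv (K := K) s i * t i)⁻¹) := by
    intro s
    rw [MvPolynomial.eval_eq', div_eq_mul_inv, Finset.sum_mul]
    refine Finset.sum_congr rfl fun k _ => ?_
    rw [mul_assoc, ← Finset.prod_inv_distrib, ← Finset.prod_mul_distrib]
  simp only [step1]
  rw [Finset.sum_comm]
  rw [Finset.sum_filter]
  refine Finset.sum_congr rfl fun k _ => ?_
  rw [← Finset.mul_sum]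
  congr 1
  have : ∑ s : Fin n → Bool,
      ∏ i, ((sgnv (K := K) s i * t i) ^ (k i) * (2 * sgnv (K := K) s i * t i)⁻¹)
      = ∏ i, ∑ b : Bool,
          ((if b then (1:K) else -1) * t i) ^ (k i) * (2 * (if b then (1:K) else -1) * t i)⁻¹ := by
    rw [Finset.prod_univ_sum (fun _ => (Finset.univ : Finset Bool))]
    rw [Fintype.piFinset_univ]
    rfl
  rw [this]
  simp only [bool_sum_key hK _ (ht _)]
  rw [Finset.prod_ite_zero]
  simp only [Finset.mem_univ, forall_true_left]
  split_ifs with h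
  · rfl
  · simp
end

section
/- Let K be a field of characteristic ≠ 2, n ≥ 1, and t : Fin n → K with t i ≠ 0 for all i. Let W ∈ MvPolynomial (Fin n) K be a polynomial such that every exponent vector k in the support of W has k i odd for every i ∈ Fin n. Then the sum over all sign vectors ε of (evaluation of W at the point i ↦ ε i · t i) / (∏ i, 2·ε i·t i) equals (evaluation of W at t) / (∏ i, t i). (Special case of the Section 4 push-forward formula for a polynomial whose every monomial has odd degree in each variable: ∫_{LG(n)} V = W(t_1,…,t_n) / (t_1⋯t_n · ∏_{i<j}(t_j^2 − t_i^2)).) -/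
open Finset

/-- Special case of the Section 4 push-forward formula: if every monomial of `W` has
odd exponent in each variable, the sign-vector sum equals `W(t) / ∏ i, t_i`. -/
theorem pushforward_all_odd (K : Type*) [Field K] (hK : (2 : K) ≠ 0)
    (n : ℕ) (hn : 1 ≤ n)
    (t : Fin n → K) (ht : ∀ i, t i ≠ 0)
    (W : MvPolynomial (Fin n) K)
    (hW : ∀ k ∈ W.support, ∀ i : Fin n, Odd (k i)) :
    ∑ s : Fin n → Bool,
      MvPolynomial.eval (fun i => sgnv (K := K) s i * t i) W /
        ∏ i, 2 * sgnv (K := K) s i * t i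
      = MvPolynomial.eval t W / ∏ i, t i := by
  have hsq : ∀ (s : Fin n → Bool) (i : Fin n), sgnv (K := K) s i * sgnv (K := K) s i = 1 := by
    intro s i; unfold sgnv; split <;> ring
  have hne : ∀ (s : Fin n → Bool) (i : Fin n), sgnv (K := K) s i ≠ 0 := by
    intro s i h
    have := hsq s i
    rw [h, mul_zero] at this
    exact zero_ne_one this
  have key : ∀ s : Fin n → Bool,
      MvPolynomial.eval (fun i => sgnv (K := K) s i * t i) W
        = (∏ i, sgnv (K := K) s i) * MvPolynomial.eval t W := by
    intro s
    rw [MvPolynomial.eval_eq', MvPolynomial.eval_eq', Finset.mul_sum]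
    refine Finset.sum_congr rfl fun k hk => ?_
    have hpow : ∀ i : Fin n, (sgnv (K := K) s i * t i) ^ (k i)
        = sgnv (K := K) s i * t i ^ (k i) := by
      intro i
      rw [mul_pow]
      congr 1
      unfold sgnv
      split
      · simp
      · exact Odd.neg_one_pow (hW k hk i)
    simp_rw [hpow]
    rw [Finset.prod_mul_distrib]
    ring
  have hden : ∀ s : Fin n → Bool,
      (∏ i : Fin n, 2 * sgnv (K := K) s i * t i)
        = (2 : K) ^ n * (∏ i, sgnv (K := K) s i) * ∏ i, t i := by
    intro s
    rw [Finset.prod_mul_distrib, Finset.prod_mul_distrib]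
    simp [Finset.prod_const]
  have hterm : ∀ s : Fin n → Bool,
      MvPolynomial.eval (fun i => sgnv (K := K) s i * t i) W /
        ∏ i, 2 * sgnv (K := K) s i * t i
      = MvPolynomial.eval t W / ((2 : K) ^ n * ∏ i, t i) := by
    intro s
    rw [key s, hden s]
    have hp : (∏ i, sgnv (K := K) s i) ≠ 0 := Finset.prod_ne_zero_iff.mpr fun i _ => hne s i
    have hre : ((2 : K) ^ n * ∏ i, sgnv (K := K) s i) * ∏ i, t i
        = (∏ i, sgnv (K := K) s i) * ((2 : K) ^ n * ∏ i, t i) := by ring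
    rw [hre, mul_div_mul_left _ _ hp]
  rw [Finset.sum_congr rfl fun s _ => hterm s, Finset.sum_const, Finset.card_univ]
  have hc : Fintype.card (Fin n → Bool) = 2 ^ n := by simp
  rw [hc, nsmul_eq_mul, Nat.cast_pow, Nat.cast_two]
  have hP : (∏ i, t i) ≠ 0 := Finset.prod_ne_zero_iff.mpr fun i _ => ht i
  have h2 : (2 : K) ^ n ≠ 0 := pow_ne_zero n hK
  rw [mul_div_assoc', mul_div_mul_left _ _ h2]
end
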